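/- arXiv:1804.06539 — 9 statements merged into one kernel-verified Lean document; each statement's English description precedes it below -/
import Mathlib

section
/- Let z be a point at which g₀ and all g_i are differentiable, let r > 0, and let d* minimize L_z over the closed ball {d ∈ ℝ^n : ‖d‖ ≤ r}. If the predicted cost reduction vanishes, i.e. J(z) − L_z(d*) = 0, then d = 0 is a global minimizer of L_z: L_z(d) ≥ J(z) for every d ∈ ℝ^n. -/
open RealInnerProductSpace Metric Filter Topology Asymptotics

noncomputable def Jpen {n : ℕ} {ι : Type*} (E I : Finset ι)
    (g₀ : EuclideanSpace ℝ (Fin n) → ℝ) (g : ι → EuclideanSpace ℝ (Fin n) → ℝ)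
    (lam : ι → ℝ) (z : EuclideanSpace ℝ (Fin n)) : ℝ :=
  g₀ z + ∑ i ∈ E, lam i * |g i z| + ∑ i ∈ I, lam i * max 0 (g i z)

noncomputable def Lpen {n : ℕ} {ι : Type*} (E I : Finset ι)
    (g₀ : EuclideanSpace ℝ (Fin n) → ℝ) (g : ι → EuclideanSpace ℝ (Fin n) → ℝ)
    (lam : ι → ℝ) (z d : EuclideanSpace ℝ (Fin n)) : ℝ :=
  g₀ z + ⟪gradient g₀ z, d⟫ +
    ∑ i ∈ E, lam i * |g i z + ⟪gradient (g i) z, d⟫| +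
    ∑ i ∈ I, lam i * max 0 (g i z + ⟪gradient (g i) z, d⟫)

theorem stmt1 {n : ℕ} {ι : Type*} [DecidableEq ι] (E I : Finset ι) (hEI : Disjoint E I)
    (g₀ : EuclideanSpace ℝ (Fin n) → ℝ) (g : ι → EuclideanSpace ℝ (Fin n) → ℝ)
    (lam : ι → ℝ) (hlam : ∀ i ∈ E ∪ I, 0 ≤ lam i)
    (z : EuclideanSpace ℝ (Fin n))
    (hg₀ : DifferentiableAt ℝ g₀ z) (hg : ∀ i ∈ E ∪ I, DifferentiableAt ℝ (g i) z)
    (r : ℝ) (hr : 0 < r)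
    (dstar : EuclideanSpace ℝ (Fin n)) (hdstar : dstar ∈ closedBall (0 : EuclideanSpace ℝ (Fin n)) r)
    (hmin : IsMinOn (Lpen E I g₀ g lam z) (closedBall 0 r) dstar)
    (hzero : Jpen E I g₀ g lam z - Lpen E I g₀ g lam z dstar = 0) :
    ∀ d : EuclideanSpace ℝ (Fin n), Lpen E I g₀ g lam z d ≥ Jpen E I g₀ g lam z := by
  intro d
  set L := Lpen E I g₀ g lam z with hLdef
  have hL0 : L 0 = Jpen E I g₀ g lam z := by
    simp [hLdef, Lpen, Jpen, inner_zero_right]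
  by_cases hd : d = 0
  · simp [hd, ge_iff_le, hL0.symm.le]
  · have hdn : (0:ℝ) < ‖d‖ := norm_pos_iff.mpr hd
    set t : ℝ := min 1 (r / ‖d‖) with ht
    have ht0 : 0 < t := lt_min one_pos (div_pos hr hdn)
    have ht1 : t ≤ 1 := min_le_left _ _
    have hmem : t • d ∈ closedBall (0 : EuclideanSpace ℝ (Fin n)) r := by
      rw [mem_closedBall, dist_zero_right, norm_smul, Real.norm_eq_abs,
        abs_of_pos ht0]
      calc t * ‖d‖ ≤ (r / ‖d‖) * ‖d‖ :=
            mul_le_mul_of_nonneg_right (min_le_right _ _) hdn.le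
        _ = r := div_mul_cancel₀ r hdn.ne'
    have key_abs : ∀ a b : ℝ, |a + t * b| ≤ (1 - t) * |a| + t * |a + b| := by
      intro a b
      have h1 : a + t * b = (1 - t) * a + t * (a + b) := by ring
      rw [h1]
      calc |(1 - t) * a + t * (a + b)| ≤ |(1 - t) * a| + |t * (a + b)| := abs_add_le _ _
        _ = (1 - t) * |a| + t * |a + b| := by
            rw [abs_mul, abs_mul, abs_of_nonneg (by linarith), abs_of_nonneg ht0.le]
    have key_max : ∀ a b : ℝ, max 0 (a + t * b) ≤ (1 - t) * max 0 a + t * max 0 (a + b) := by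
      intro a b
      apply max_le
      · have h1 : 0 ≤ (1 - t) * max 0 a := mul_nonneg (by linarith) (le_max_left _ _)
        have h2 : 0 ≤ t * max 0 (a + b) := mul_nonneg ht0.le (le_max_left _ _)
        linarith
      · have h1 : a + t * b = (1 - t) * a + t * (a + b) := by ring
        rw [h1]
        have := le_max_right (0:ℝ) a
        have := le_max_right (0:ℝ) (a + b)
        nlinarith
    have hE : ∑ i ∈ E, lam i * |g i z + t * ⟪gradient (g i) z, d⟫|
        ≤ ∑ i ∈ E, ((1 - t) * (lam i * |g i z|) + t * (lam i * |g i z + ⟪gradient (g i) z, d⟫|)) := by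
      refine Finset.sum_le_sum fun i hi => ?_
      have hl := hlam i (Finset.mem_union_left _ hi)
      have h := key_abs (g i z) ⟪gradient (g i) z, d⟫
      nlinarith
    have hI : ∑ i ∈ I, lam i * max 0 (g i z + t * ⟪gradient (g i) z, d⟫)
        ≤ ∑ i ∈ I, ((1 - t) * (lam i * max 0 (g i z)) + t * (lam i * max 0 (g i z + ⟪gradient (g i) z, d⟫))) := by
      refine Finset.sum_le_sum fun i hi => ?_
      have hl := hlam i (Finset.mem_union_right _ hi)
      have h := key_max (g i z) ⟪gradient (g i) z, d⟫
      nlinarith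
    have hcvx : L (t • d) ≤ (1 - t) * L 0 + t * L d := by
      simp only [hLdef, Lpen, real_inner_smul_right, inner_zero_right]
      rw [Finset.sum_add_distrib, ← Finset.mul_sum, ← Finset.mul_sum] at hE
      rw [Finset.sum_add_distrib, ← Finset.mul_sum, ← Finset.mul_sum] at hI
      simp only [add_zero]
      nlinarith [hE, hI]
    have hmin0 : L 0 ≤ L (t • d) := by
      have h1 : L dstar ≤ L (t • d) := hmin hmem
      have h2 : L dstar = Jpen E I g₀ g lam z := by linarith [hzero]
      linarith [hL0]
    have : t * L 0 ≤ t * L d := by linarith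
    have hfin : L 0 ≤ L d := le_of_mul_le_mul_left this ht0
    rw [ge_iff_le, ← hL0]
    exact hfin
end

section
/- Let z be a point at which g₀ and all g_i (i ∈ E ∪ I) are (Fréchet) differentiable. Then the linearization error of the penalized cost is of higher order: the function d ↦ J(z + d) − L_z(d) is o(‖d‖) as d → 0; that is, (J(z + d) − L_z(d)) / ‖d‖ → 0 as d → 0. -/
open RealInnerProductSpace Metric Filter Topology Asymptotics

theorem stmt3 {n : ℕ} {ι : Type*} [DecidableEq ι] (E I : Finset ι) (hEI : Disjoint E I)
    (g₀ : EuclideanSpace ℝ (Fin n) → ℝ) (g : ι → EuclideanSpace ℝ (Fin n) → ℝ)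
    (lam : ι → ℝ) (hlam : ∀ i ∈ E ∪ I, 0 ≤ lam i)
    (z : EuclideanSpace ℝ (Fin n))
    (hg₀ : DifferentiableAt ℝ g₀ z) (hg : ∀ i ∈ E ∪ I, DifferentiableAt ℝ (g i) z) :
    (fun d => Jpen E I g₀ g lam (z + d) - Lpen E I g₀ g lam z d) =o[𝓝 0]
      fun d : EuclideanSpace ℝ (Fin n) => ‖d‖ := by
  have key : ∀ f : EuclideanSpace ℝ (Fin n) → ℝ, DifferentiableAt ℝ f z →
      (fun d => f (z + d) - f z - ⟪gradient f z, d⟫) =o[𝓝 0]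
        (fun d : EuclideanSpace ℝ (Fin n) => ‖d‖) := by
    intro f hf
    have h := hf.hasGradientAt.hasFDerivAt
    rw [hasFDerivAt_iff_isLittleO_nhds_zero] at h
    have := h.norm_right
    simpa [InnerProductSpace.toDual_apply_apply] using this
  have hE : ∀ i ∈ E, (fun d => lam i * |g i (z + d)| -
      lam i * |g i z + ⟪gradient (g i) z, d⟫|) =o[𝓝 0]
        (fun d : EuclideanSpace ℝ (Fin n) => ‖d‖) := by
    intro i hi
    have hk := (key (g i) (hg i (Finset.mem_union_left _ hi))).const_mul_left (lam i)
    refine (Asymptotics.isBigO_of_le (𝓝 0) fun d => ?_).trans_isLittleO hk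
    rw [← mul_sub]
    simp only [Real.norm_eq_abs, abs_mul]
    refine mul_le_mul_of_nonneg_left ?_ (abs_nonneg _)
    calc |(|g i (z + d)| - |g i z + ⟪gradient (g i) z, d⟫|)|
        ≤ |g i (z + d) - (g i z + ⟪gradient (g i) z, d⟫)| := abs_abs_sub_abs_le_abs_sub _ _
      _ = |g i (z + d) - g i z - ⟪gradient (g i) z, d⟫| := by ring_nf
  have hI : ∀ i ∈ I, (fun d => lam i * max 0 (g i (z + d)) -
      lam i * max 0 (g i z + ⟪gradient (g i) z, d⟫)) =o[𝓝 0]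
        (fun d : EuclideanSpace ℝ (Fin n) => ‖d‖) := by
    intro i hi
    have hk := (key (g i) (hg i (Finset.mem_union_right _ hi))).const_mul_left (lam i)
    refine (Asymptotics.isBigO_of_le (𝓝 0) fun d => ?_).trans_isLittleO hk
    rw [← mul_sub]
    simp only [Real.norm_eq_abs, abs_mul]
    refine mul_le_mul_of_nonneg_left ?_ (abs_nonneg _)
    calc |max 0 (g i (z + d)) - max 0 (g i z + ⟪gradient (g i) z, d⟫)|
        = |max (g i (z + d)) 0 - max (g i z + ⟪gradient (g i) z, d⟫) 0| := by
          rw [max_comm, max_comm (g i z + _)]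
      _ ≤ |g i (z + d) - (g i z + ⟪gradient (g i) z, d⟫)| := abs_max_sub_max_le_abs _ _ _
      _ = |g i (z + d) - g i z - ⟪gradient (g i) z, d⟫| := by ring_nf
  have hdecomp : (fun d => Jpen E I g₀ g lam (z + d) - Lpen E I g₀ g lam z d) =
      fun d => (g₀ (z + d) - g₀ z - ⟪gradient g₀ z, d⟫) +
        (∑ i ∈ E, (lam i * |g i (z + d)| - lam i * |g i z + ⟪gradient (g i) z, d⟫|)) +
        (∑ i ∈ I, (lam i * max 0 (g i (z + d)) - lam i * max 0 (g i z + ⟪gradient (g i) z, d⟫))) := by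
    funext d
    simp only [Jpen, Lpen, Finset.sum_sub_distrib]
    ring
  rw [hdecomp]
  have hfin := ((key g₀ hg₀).add (Asymptotics.IsLittleO.sum hE)).add (Asymptotics.IsLittleO.sum hI)
  simpa only [Finset.sum_apply] using hfin
end

section
/- (Main ratio lemma.) Assume g₀ and all g_i are differentiable with Lipschitz continuous gradients on ℝ^n. Let z̄ ∈ ℝ^n and suppose there exist a unit vector s ∈ ℝ^n, κ > 0, and ε₀ > 0 such that J(z + δ s) − J(z) < −(κ/2)δ for all z with ‖z − z̄‖ < ε₀ and all δ ∈ (0, ε₀]. Then for every c ∈ (0, 1) there exist r̄ > 0 and ε̄ > 0 such that for every z with ‖z − z̄‖ < ε̄, every r ∈ (0, r̄], and every d* minimizing L_z over the closed ball {d : ‖d‖ ≤ r}, one has J(z) − L_z(d*) > 0 and J(z) − J(z + d*) ≥ c · (J(z) − L_z(d*)). -/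
open RealInnerProductSpace Metric Filter Topology Asymptotics

lemma taylor_bound {n : ℕ} {f : EuclideanSpace ℝ (Fin n) → ℝ} (hf : Differentiable ℝ f)
    {K : NNReal} (hK : LipschitzWith K (gradient f)) (z d : EuclideanSpace ℝ (Fin n)) :
    |f (z + d) - (f z + ⟪gradient f z, d⟫)| ≤ K * ‖d‖ ^ 2 := by
  have hconv : Convex ℝ (closedBall z ‖d‖) := convex_closedBall _ _
  have hz : z ∈ closedBall z ‖d‖ := mem_closedBall_self (norm_nonneg d)
  have hzd : z + d ∈ closedBall z ‖d‖ := by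
    simp [mem_closedBall, dist_eq_norm]
  have hbound : ∀ x ∈ closedBall z ‖d‖,
      ‖fderiv ℝ f x - fderiv ℝ f z‖ ≤ (K : ℝ) * ‖d‖ := by
    intro x hx
    have h1 : ‖gradient f x - gradient f z‖ ≤ (K : ℝ) * ‖x - z‖ := by
      simpa [dist_eq_norm] using hK.dist_le_mul x z
    have h2 : ‖gradient f x - gradient f z‖ = ‖fderiv ℝ f x - fderiv ℝ f z‖ := by
      rw [gradient, gradient, ← map_sub]
      exact (InnerProductSpace.toDual ℝ _).symm.norm_map _
    rw [← h2]
    refine h1.trans (mul_le_mul_of_nonneg_left ?_ K.2)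
    simpa [mem_closedBall, dist_eq_norm] using hx
  have key := hconv.norm_image_sub_le_of_norm_fderiv_le'
    (fun x _ => hf x) hbound hz hzd
  have happ : (fderiv ℝ f z) (z + d - z) = ⟪gradient f z, d⟫ := by
    have h3 : (InnerProductSpace.toDual ℝ _) (gradient f z) = fderiv ℝ f z := by
      rw [gradient]; exact (InnerProductSpace.toDual ℝ _).apply_symm_apply _
    rw [← h3]
    simp [InnerProductSpace.toDual_apply_apply]
  rw [happ] at key
  calc |f (z + d) - (f z + ⟪gradient f z, d⟫)|
      = ‖f (z + d) - f z - ⟪gradient f z, d⟫‖ := by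
        rw [Real.norm_eq_abs]; congr 1; ring
    _ ≤ (K : ℝ) * ‖d‖ * ‖z + d - z‖ := key
    _ = K * ‖d‖ ^ 2 := by simp [pow_two]; ring

lemma err_bound {n : ℕ} {ι : Type*} [DecidableEq ι] (E I : Finset ι) (hEI : Disjoint E I)
    (g₀ : EuclideanSpace ℝ (Fin n) → ℝ) (g : ι → EuclideanSpace ℝ (Fin n) → ℝ)
    (lam : ι → ℝ) (hlam : ∀ i ∈ E ∪ I, 0 ≤ lam i)
    (hg₀ : Differentiable ℝ g₀) (K₀ : NNReal) (hK₀ : LipschitzWith K₀ (gradient g₀))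
    (hg : ∀ i ∈ E ∪ I, Differentiable ℝ (g i))
    (Kf : ι → NNReal) (hKf : ∀ i ∈ E ∪ I, LipschitzWith (Kf i) (gradient (g i)))
    (z d : EuclideanSpace ℝ (Fin n)) :
    |Jpen E I g₀ g lam (z + d) - Lpen E I g₀ g lam z d| ≤
      ((K₀ : ℝ) + ∑ i ∈ E ∪ I, lam i * Kf i) * ‖d‖ ^ 2 := by
  have hterm : ∀ i ∈ E ∪ I,
      |g i (z + d) - (g i z + ⟪gradient (g i) z, d⟫)| ≤ (Kf i : ℝ) * ‖d‖ ^ 2 :=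
    fun i hi => taylor_bound (hg i hi) (hKf i hi) z d
  have hE : ∀ i ∈ E,
      abs (lam i * |g i (z + d)| - lam i * |g i z + ⟪gradient (g i) z, d⟫|)
      ≤ lam i * Kf i * ‖d‖ ^ 2 := by
    intro i hi
    have hi' : i ∈ E ∪ I := Finset.mem_union_left _ hi
    rw [← mul_sub, abs_mul, abs_of_nonneg (hlam i hi')]
    calc lam i * abs (|g i (z + d)| - |g i z + ⟪gradient (g i) z, d⟫|)
        ≤ lam i * ((Kf i : ℝ) * ‖d‖ ^ 2) :=
          mul_le_mul_of_nonneg_left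
            ((abs_abs_sub_abs_le_abs_sub _ _).trans (hterm i hi')) (hlam i hi')
      _ = lam i * Kf i * ‖d‖ ^ 2 := by ring
  have hI : ∀ i ∈ I,
      abs (lam i * max 0 (g i (z + d)) - lam i * max 0 (g i z + ⟪gradient (g i) z, d⟫))
      ≤ lam i * Kf i * ‖d‖ ^ 2 := by
    intro i hi
    have hi' : i ∈ E ∪ I := Finset.mem_union_right _ hi
    rw [← mul_sub, abs_mul, abs_of_nonneg (hlam i hi')]
    have hmax : abs (max 0 (g i (z + d)) - max 0 (g i z + ⟪gradient (g i) z, d⟫))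
        ≤ |g i (z + d) - (g i z + ⟪gradient (g i) z, d⟫)| := by
      rw [max_comm 0 (g i (z + d)), max_comm 0 (g i z + ⟪gradient (g i) z, d⟫)]
      exact abs_max_sub_max_le_abs _ _ _
    calc lam i * abs (max 0 (g i (z + d)) - max 0 (g i z + ⟪gradient (g i) z, d⟫))
        ≤ lam i * ((Kf i : ℝ) * ‖d‖ ^ 2) :=
          mul_le_mul_of_nonneg_left (hmax.trans (hterm i hi')) (hlam i hi')
      _ = lam i * Kf i * ‖d‖ ^ 2 := by ring
  have hsplit : Jpen E I g₀ g lam (z + d) - Lpen E I g₀ g lam z d =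
      (g₀ (z + d) - (g₀ z + ⟪gradient g₀ z, d⟫))
      + (∑ i ∈ E, (lam i * |g i (z + d)| - lam i * |g i z + ⟪gradient (g i) z, d⟫|))
      + (∑ i ∈ I, (lam i * max 0 (g i (z + d))
          - lam i * max 0 (g i z + ⟪gradient (g i) z, d⟫))) := by
    simp only [Jpen, Lpen, Finset.sum_sub_distrib]
    ring
  rw [hsplit]
  have h0 : |g₀ (z + d) - (g₀ z + ⟪gradient g₀ z, d⟫)| ≤ (K₀ : ℝ) * ‖d‖ ^ 2 :=
    taylor_bound hg₀ hK₀ z d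
  calc abs (_ + _ + _) ≤ _ := abs_add_three _ _ _
    _ ≤ (K₀ : ℝ) * ‖d‖ ^ 2 + (∑ i ∈ E, lam i * Kf i * ‖d‖ ^ 2)
        + (∑ i ∈ I, lam i * Kf i * ‖d‖ ^ 2) :=
      add_le_add (add_le_add h0
        ((Finset.abs_sum_le_sum_abs _ _).trans (Finset.sum_le_sum hE)))
        ((Finset.abs_sum_le_sum_abs _ _).trans (Finset.sum_le_sum hI))
    _ = ((K₀ : ℝ) + ∑ i ∈ E ∪ I, lam i * Kf i) * ‖d‖ ^ 2 := by
      rw [Finset.sum_union hEI, ← Finset.sum_mul, ← Finset.sum_mul]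
      ring

set_option maxHeartbeats 2000000 in
theorem stmt4 {n : ℕ} {ι : Type*} [DecidableEq ι] (E I : Finset ι) (hEI : Disjoint E I)
    (g₀ : EuclideanSpace ℝ (Fin n) → ℝ) (g : ι → EuclideanSpace ℝ (Fin n) → ℝ)
    (lam : ι → ℝ) (hlam : ∀ i ∈ E ∪ I, 0 ≤ lam i)
    (hg₀ : Differentiable ℝ g₀) (hg₀' : ∃ K : NNReal, LipschitzWith K (gradient g₀))
    (hg : ∀ i ∈ E ∪ I, Differentiable ℝ (g i))
    (hg' : ∀ i ∈ E ∪ I, ∃ K : NNReal, LipschitzWith K (gradient (g i)))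
    (zbar s : EuclideanSpace ℝ (Fin n)) (hs : ‖s‖ = 1)
    (κ ε₀ : ℝ) (hκ : 0 < κ) (hε₀ : 0 < ε₀)
    (hdesc : ∀ z : EuclideanSpace ℝ (Fin n), ‖z - zbar‖ < ε₀ → ∀ δ : ℝ, 0 < δ → δ ≤ ε₀ →
      Jpen E I g₀ g lam (z + δ • s) - Jpen E I g₀ g lam z < -(κ / 2) * δ) :
    ∀ c : ℝ, 0 < c → c < 1 → ∃ rbar > (0 : ℝ), ∃ εbar > (0 : ℝ),
      ∀ z : EuclideanSpace ℝ (Fin n), ‖z - zbar‖ < εbar →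
        ∀ r : ℝ, 0 < r → r ≤ rbar →
          ∀ dstar ∈ closedBall (0 : EuclideanSpace ℝ (Fin n)) r,
            IsMinOn (Lpen E I g₀ g lam z) (closedBall 0 r) dstar →
            0 < Jpen E I g₀ g lam z - Lpen E I g₀ g lam z dstar ∧
            Jpen E I g₀ g lam z - Jpen E I g₀ g lam (z + dstar) ≥
              c * (Jpen E I g₀ g lam z - Lpen E I g₀ g lam z dstar) := by
  classical
  obtain ⟨K₀, hK₀⟩ := hg₀'
  obtain ⟨Kf, hKf⟩ : ∃ Kf : ι → NNReal,
      ∀ i ∈ E ∪ I, LipschitzWith (Kf i) (gradient (g i)) :=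
    ⟨fun i => if h : ∃ K : NNReal, LipschitzWith K (gradient (g i)) then h.choose else 0,
      fun i hi => by
        simp only [dif_pos (hg' i hi)]
        exact (hg' i hi).choose_spec⟩
  obtain ⟨M, hM0, herr⟩ : ∃ M : ℝ, 0 ≤ M ∧ ∀ z d : EuclideanSpace ℝ (Fin n),
      |Jpen E I g₀ g lam (z + d) - Lpen E I g₀ g lam z d| ≤ M * ‖d‖ ^ 2 :=
    ⟨(K₀ : ℝ) + ∑ i ∈ E ∪ I, lam i * Kf i,
      add_nonneg K₀.2 (Finset.sum_nonneg fun i hi => mul_nonneg (hlam i hi) (Kf i).2),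
      fun z d => err_bound E I hEI g₀ g lam hlam hg₀ K₀ hK₀ hg Kf hKf z d⟩
  obtain ⟨M', hM'pos, hMM'⟩ : ∃ M' : ℝ, 0 < M' ∧ M ≤ M' := ⟨M + 1, by linarith, by linarith⟩
  intro c hc hc1
  have h1c : 0 < 1 - c := by linarith
  refine ⟨min ε₀ (min (κ / (4 * M')) ((1 - c) * κ / (4 * M'))), ?_, ε₀, hε₀, ?_⟩
  · refine lt_min hε₀ (lt_min ?_ ?_)
    · exact div_pos hκ (by linarith)
    · exact div_pos (mul_pos h1c hκ) (by linarith)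
  intro z hz r hr hrle dstar hdball hmin
  have hrε₀ : r ≤ ε₀ := hrle.trans (min_le_left _ _)
  have hr1 : r ≤ κ / (4 * M') := hrle.trans ((min_le_right _ _).trans (min_le_left _ _))
  have hr2 : r ≤ (1 - c) * κ / (4 * M') :=
    hrle.trans ((min_le_right _ _).trans (min_le_right _ _))
  have hMr2a : M * r ^ 2 ≤ κ / 4 * r := by
    have h1 : M' * r ≤ κ / 4 := by
      have h := mul_le_mul_of_nonneg_left hr1 hM'pos.le
      have heq : M' * (κ / (4 * M')) = κ / 4 := by field_simp
      linarith [heq ▸ h]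
    have e1 : M * r ^ 2 ≤ M' * r ^ 2 := mul_le_mul_of_nonneg_right hMM' (sq_nonneg r)
    have e2 : M' * r * r ≤ κ / 4 * r := mul_le_mul_of_nonneg_right h1 hr.le
    nlinarith [e1, e2]
  have hMr2b : M * r ^ 2 ≤ (1 - c) * κ / 4 * r := by
    have h1 : M' * r ≤ (1 - c) * κ / 4 := by
      have h := mul_le_mul_of_nonneg_left hr2 hM'pos.le
      have heq : M' * ((1 - c) * κ / (4 * M')) = (1 - c) * κ / 4 := by field_simp
      linarith [heq ▸ h]
    have e1 : M * r ^ 2 ≤ M' * r ^ 2 := mul_le_mul_of_nonneg_right hMM' (sq_nonneg r)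
    have e2 : M' * r * r ≤ (1 - c) * κ / 4 * r := mul_le_mul_of_nonneg_right h1 hr.le
    nlinarith [e1, e2]
  have hn : ‖r • s‖ = r := by
    rw [norm_smul, hs, mul_one, Real.norm_eq_abs, abs_of_pos hr]
  have hrs : (r • s) ∈ closedBall (0 : EuclideanSpace ℝ (Fin n)) r := by
    rw [mem_closedBall, dist_zero_right, hn]
  have hLle : Lpen E I g₀ g lam z dstar ≤ Lpen E I g₀ g lam z (r • s) :=
    isMinOn_iff.mp hmin _ hrs
  have hd := hdesc z hz r hr hrε₀
  have herr_rs : |Jpen E I g₀ g lam (z + r • s) - Lpen E I g₀ g lam z (r • s)|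
      ≤ M * r ^ 2 := by
    have h := herr z (r • s); rwa [hn] at h
  have hlow := (abs_le.mp herr_rs).1
  have hGlb : κ / 4 * r < Jpen E I g₀ g lam z - Lpen E I g₀ g lam z dstar := by
    nlinarith [hd, hlow, hLle, hMr2a]
  have hpos : 0 < κ / 4 * r := mul_pos (by linarith) hr
  refine ⟨by linarith, ?_⟩
  have hds : ‖dstar‖ ≤ r := by
    rwa [mem_closedBall, dist_zero_right] at hdball
  have herr_d : |Jpen E I g₀ g lam (z + dstar) - Lpen E I g₀ g lam z dstar| ≤ M * r ^ 2 := by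
    refine (herr z dstar).trans ?_
    have hsq : ‖dstar‖ ^ 2 ≤ r ^ 2 := by nlinarith [norm_nonneg dstar]
    exact mul_le_mul_of_nonneg_left hsq hM0
  have h2 := (abs_le.mp herr_d).2
  have h3 : (1 - c) * (κ / 4 * r)
      ≤ (1 - c) * (Jpen E I g₀ g lam z - Lpen E I g₀ g lam z dstar) :=
    mul_le_mul_of_nonneg_left hGlb.le h1c.le
  nlinarith [h2, h3, hMr2b]
end

section
/- (Global weak convergence of the successive convexification iteration.) Assume g₀ and all g_i are continuously differentiable on ℝ^n. Let Z ⊆ ℝ^n be a nonempty compact set, let r_l > 0 and ρ₀ ∈ (0, 1), and let {z^k} be a sequence in Z such that for every k there exist r^k ≥ r_l and d^k minimizing L_{z^k} over the closed ball {d : ‖d‖ ≤ r^k} with z^{k+1} = z^k + d^k and J(z^k) − J(z^{k+1}) ≥ ρ₀ · (J(z^k) − L_{z^k}(d^k)). Then {z^k} has at least one convergent subsequence, and every limit point z̄ of {z^k} is stationary for the linearized problem in the sense that L_{z̄}(d) ≥ J(z̄) for all d ∈ ℝ^n. -/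
open RealInnerProductSpace Metric Filter Topology Asymptotics

lemma Lpen_zero' {n : ℕ} {ι : Type*} (E I : Finset ι)
    (g₀ : EuclideanSpace ℝ (Fin n) → ℝ) (g : ι → EuclideanSpace ℝ (Fin n) → ℝ)
    (lam : ι → ℝ) (z : EuclideanSpace ℝ (Fin n)) :
    Lpen E I g₀ g lam z 0 = Jpen E I g₀ g lam z := by
  simp [Lpen, Jpen]

lemma gradCont' {n : ℕ} (f : EuclideanSpace ℝ (Fin n) → ℝ) (hf : ContDiff ℝ 1 f) :
    Continuous (fun z => gradient f z) := by
  have h1 := hf.continuous_fderiv one_ne_zero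
  exact (InnerProductSpace.toDual ℝ (EuclideanSpace ℝ (Fin n))).symm.continuous.comp h1

lemma Lpen_combo' {n : ℕ} {ι : Type*} [DecidableEq ι] (E I : Finset ι)
    (g₀ : EuclideanSpace ℝ (Fin n) → ℝ) (g : ι → EuclideanSpace ℝ (Fin n) → ℝ)
    (lam : ι → ℝ) (hlam : ∀ i ∈ E ∪ I, 0 ≤ lam i)
    (z d : EuclideanSpace ℝ (Fin n)) (t : ℝ) (ht0 : 0 ≤ t) (ht1 : t ≤ 1) :
    Lpen E I g₀ g lam z (t • d) ≤
      (1 - t) * Jpen E I g₀ g lam z + t * Lpen E I g₀ g lam z d := by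
  have key : ∀ (s : Finset ι) (x y : ι → ℝ),
      ∑ i ∈ s, lam i * ((1 - t) * x i + t * y i) =
        (1 - t) * ∑ i ∈ s, lam i * x i + t * ∑ i ∈ s, lam i * y i := by
    intro s x y
    rw [Finset.mul_sum, Finset.mul_sum, ← Finset.sum_add_distrib]
    exact Finset.sum_congr rfl fun i _ => by ring
  unfold Lpen Jpen
  simp only [real_inner_smul_right]
  have hE : ∀ i ∈ E, lam i * |g i z + t * ⟪gradient (g i) z, d⟫| ≤
      lam i * ((1 - t) * |g i z| + t * |g i z + ⟪gradient (g i) z, d⟫|) := by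
    intro i hi
    apply mul_le_mul_of_nonneg_left _ (hlam i (Finset.mem_union_left _ hi))
    have h1 : g i z + t * ⟪gradient (g i) z, d⟫ =
        (1 - t) * g i z + t * (g i z + ⟪gradient (g i) z, d⟫) := by ring
    rw [h1]
    calc |(1 - t) * g i z + t * (g i z + ⟪gradient (g i) z, d⟫)|
        ≤ |(1 - t) * g i z| + |t * (g i z + ⟪gradient (g i) z, d⟫)| := abs_add_le _ _
      _ = (1 - t) * |g i z| + t * |g i z + ⟪gradient (g i) z, d⟫| := by
          rw [abs_mul, abs_mul, abs_of_nonneg (by linarith), abs_of_nonneg ht0]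
  have hI : ∀ i ∈ I, lam i * max 0 (g i z + t * ⟪gradient (g i) z, d⟫) ≤
      lam i * ((1 - t) * max 0 (g i z) + t * max 0 (g i z + ⟪gradient (g i) z, d⟫)) := by
    intro i hi
    apply mul_le_mul_of_nonneg_left _ (hlam i (Finset.mem_union_right _ hi))
    apply max_le
    · have h2 : 0 ≤ (1 - t) * max 0 (g i z) :=
        mul_nonneg (by linarith) (le_max_left _ _)
      have h3 : 0 ≤ t * max 0 (g i z + ⟪gradient (g i) z, d⟫) :=
        mul_nonneg ht0 (le_max_left _ _)
      linarith
    · have h2 : g i z ≤ max 0 (g i z) := le_max_right _ _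
      have h3 : g i z + ⟪gradient (g i) z, d⟫ ≤
          max 0 (g i z + ⟪gradient (g i) z, d⟫) := le_max_right _ _
      nlinarith [mul_le_mul_of_nonneg_left h2 (show (0:ℝ) ≤ 1 - t by linarith),
        mul_le_mul_of_nonneg_left h3 ht0]
  calc g₀ z + t * ⟪gradient g₀ z, d⟫ +
        ∑ i ∈ E, lam i * |g i z + t * ⟪gradient (g i) z, d⟫| +
        ∑ i ∈ I, lam i * max 0 (g i z + t * ⟪gradient (g i) z, d⟫)
      ≤ g₀ z + t * ⟪gradient g₀ z, d⟫ +
        ∑ i ∈ E, lam i * ((1 - t) * |g i z| + t * |g i z + ⟪gradient (g i) z, d⟫|) +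
        ∑ i ∈ I, lam i * ((1 - t) * max 0 (g i z) + t * max 0 (g i z + ⟪gradient (g i) z, d⟫)) := by
        exact add_le_add (add_le_add le_rfl (Finset.sum_le_sum hE)) (Finset.sum_le_sum hI)
    _ = (1 - t) * (g₀ z + ∑ i ∈ E, lam i * |g i z| + ∑ i ∈ I, lam i * max 0 (g i z)) +
        t * (g₀ z + ⟪gradient g₀ z, d⟫ +
          ∑ i ∈ E, lam i * |g i z + ⟪gradient (g i) z, d⟫| +
          ∑ i ∈ I, lam i * max 0 (g i z + ⟪gradient (g i) z, d⟫)) := by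
        rw [key, key]; ring

theorem stmt6 {n : ℕ} {ι : Type*} [DecidableEq ι] (E I : Finset ι) (hEI : Disjoint E I)
    (g₀ : EuclideanSpace ℝ (Fin n) → ℝ) (g : ι → EuclideanSpace ℝ (Fin n) → ℝ)
    (lam : ι → ℝ) (hlam : ∀ i ∈ E ∪ I, 0 ≤ lam i)
    (hg₀ : ContDiff ℝ 1 g₀) (hg : ∀ i ∈ E ∪ I, ContDiff ℝ 1 (g i))
    (Z : Set (EuclideanSpace ℝ (Fin n))) (hZne : Z.Nonempty) (hZ : IsCompact Z)
    (r_l ρ₀ : ℝ) (hrl : 0 < r_l) (hρ₀ : 0 < ρ₀) (hρ₀' : ρ₀ < 1)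
    (z : ℕ → EuclideanSpace ℝ (Fin n)) (hzZ : ∀ k, z k ∈ Z)
    (hstep : ∀ k : ℕ, ∃ r : ℝ, r_l ≤ r ∧
      ∃ d ∈ closedBall (0 : EuclideanSpace ℝ (Fin n)) r,
        IsMinOn (Lpen E I g₀ g lam (z k)) (closedBall 0 r) d ∧
        z (k + 1) = z k + d ∧
        Jpen E I g₀ g lam (z k) - Jpen E I g₀ g lam (z (k + 1)) ≥
          ρ₀ * (Jpen E I g₀ g lam (z k) - Lpen E I g₀ g lam (z k) d)) :
    (∃ zbar : EuclideanSpace ℝ (Fin n), ∃ φ : ℕ → ℕ, StrictMono φ ∧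
        Tendsto (z ∘ φ) atTop (𝓝 zbar)) ∧
    ∀ zbar : EuclideanSpace ℝ (Fin n),
      (∃ φ : ℕ → ℕ, StrictMono φ ∧ Tendsto (z ∘ φ) atTop (𝓝 zbar)) →
      ∀ d : EuclideanSpace ℝ (Fin n), Lpen E I g₀ g lam zbar d ≥ Jpen E I g₀ g lam zbar := by
  classical
  choose r hr d hd hmin hzeq hJineq using hstep
  -- continuity of Jpen in z
  have hcontJ : Continuous (Jpen E I g₀ g lam) := by
    unfold Jpen
    refine Continuous.add (Continuous.add hg₀.continuous ?_) ?_
    · exact continuous_finset_sum _ fun i hi =>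
        continuous_const.mul ((hg i (Finset.mem_union_left _ hi)).continuous.abs)
    · exact continuous_finset_sum _ fun i hi =>
        continuous_const.mul (continuous_const.max (hg i (Finset.mem_union_right _ hi)).continuous)
  -- continuity of z ↦ Lpen z d for fixed d
  have hcontL : ∀ d₀ : EuclideanSpace ℝ (Fin n),
      Continuous (fun w => Lpen E I g₀ g lam w d₀) := by
    intro d₀
    unfold Lpen
    refine Continuous.add (Continuous.add (Continuous.add hg₀.continuous ?_) ?_) ?_
    · exact (gradCont' g₀ hg₀).inner continuous_const
    · exact continuous_finset_sum _ fun i hi =>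
        continuous_const.mul
          (((hg i (Finset.mem_union_left _ hi)).continuous.add
            ((gradCont' (g i) (hg i (Finset.mem_union_left _ hi))).inner
              continuous_const)).abs)
    · exact continuous_finset_sum _ fun i hi =>
        continuous_const.mul
          (continuous_const.max
            ((hg i (Finset.mem_union_right _ hi)).continuous.add
              ((gradCont' (g i) (hg i (Finset.mem_union_right _ hi))).inner
                continuous_const)))
  set a : ℕ → ℝ := fun k => Jpen E I g₀ g lam (z k) with ha
  set δ : ℕ → ℝ := fun k => a k - Lpen E I g₀ g lam (z k) (d k) with hδ
  have hrk : ∀ k, (0:ℝ) < r k := fun k => hrl.trans_le (hr k)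
  have hδ0 : ∀ k, 0 ≤ δ k := by
    intro k
    have h0 : (0 : EuclideanSpace ℝ (Fin n)) ∈ closedBall (0 : EuclideanSpace ℝ (Fin n)) (r k) :=
      mem_closedBall_self (hrk k).le
    have := isMinOn_iff.mp (hmin k) 0 h0
    rw [Lpen_zero'] at this
    simp only [hδ, ha]
    linarith
  have hanti : Antitone a := by
    apply antitone_nat_of_succ_le
    intro k
    have h1 := hJineq k
    have h2 : 0 ≤ ρ₀ * δ k := mul_nonneg hρ₀.le (hδ0 k)
    simp only [ha]
    simp only [hδ, ha] at h2
    linarith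
  have hbdd : BddBelow (Set.range a) := by
    obtain ⟨x₀, hx₀, hminZ⟩ := hZ.exists_isMinOn hZne hcontJ.continuousOn
    refine ⟨Jpen E I g₀ g lam x₀, ?_⟩
    rintro y ⟨k, rfl⟩
    exact isMinOn_iff.mp hminZ (z k) (hzZ k)
  have hconv : Tendsto a atTop (𝓝 (⨅ k, a k)) := tendsto_atTop_ciInf hanti hbdd
  have hconv' : Tendsto (fun k => a (k + 1)) atTop (𝓝 (⨅ k, a k)) :=
    hconv.comp (tendsto_add_atTop_nat 1)
  have hdiff : Tendsto (fun k => a k - a (k + 1)) atTop (𝓝 0) := by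
    have := hconv.sub hconv'
    simpa using this
  have hδlim : Tendsto δ atTop (𝓝 0) := by
    apply squeeze_zero hδ0 (g := fun k => (a k - a (k + 1)) / ρ₀)
    · intro k
      rw [le_div_iff₀ hρ₀]
      have h1 := hJineq k
      simp only [hδ, ha]
      nlinarith [hδ0 k]
    · simpa using hdiff.div_const ρ₀
  constructor
  · obtain ⟨zbar, _, φ, hφ, hφlim⟩ := hZ.tendsto_subseq hzZ
    exact ⟨zbar, φ, hφ, hφlim⟩
  · rintro zbar ⟨φ, hφ, hφlim⟩ d₀
    -- Step A: for d' with ‖d'‖ ≤ r_l, Jpen zbar ≤ Lpen zbar d'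
    have stepA : ∀ d' : EuclideanSpace ℝ (Fin n), ‖d'‖ ≤ r_l →
        Jpen E I g₀ g lam zbar - Lpen E I g₀ g lam zbar d' ≤ 0 := by
      intro d' hd'
      have hk : ∀ k, a k - Lpen E I g₀ g lam (z k) d' ≤ δ k := by
        intro k
        have hmem : d' ∈ closedBall (0 : EuclideanSpace ℝ (Fin n)) (r k) :=
          mem_closedBall_zero_iff.mpr (hd'.trans (hr k))
        have := isMinOn_iff.mp (hmin k) d' hmem
        simp only [hδ, ha]
        linarith
      have hlimL : Tendsto (fun j => a (φ j) - Lpen E I g₀ g lam (z (φ j)) d') atTop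
          (𝓝 (Jpen E I g₀ g lam zbar - Lpen E I g₀ g lam zbar d')) := by
        have h1 : Tendsto (fun j => a (φ j)) atTop (𝓝 (Jpen E I g₀ g lam zbar)) :=
          (hcontJ.tendsto zbar).comp hφlim
        have h2 : Tendsto (fun j => Lpen E I g₀ g lam (z (φ j)) d') atTop
            (𝓝 (Lpen E I g₀ g lam zbar d')) :=
          ((hcontL d').tendsto zbar).comp hφlim
        exact h1.sub h2
      have hδφ : Tendsto (δ ∘ φ) atTop (𝓝 0) := hδlim.comp hφ.tendsto_atTop
      exact le_of_tendsto_of_tendsto' hlimL hδφ (fun j => hk (φ j))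
    -- Step B: extend to arbitrary d₀ via convexity
    set t : ℝ := r_l / max r_l ‖d₀‖ with htdef
    have hmax : (0:ℝ) < max r_l ‖d₀‖ := lt_max_of_lt_left hrl
    have ht0 : 0 < t := div_pos hrl hmax
    have ht1 : t ≤ 1 := by
      rw [div_le_one hmax]; exact le_max_left _ _
    have hnorm : ‖t • d₀‖ ≤ r_l := by
      rw [norm_smul, Real.norm_eq_abs, abs_of_pos ht0, htdef,
        div_mul_eq_mul_div, div_le_iff₀ hmax]
      exact mul_le_mul_of_nonneg_left (le_max_right _ _) hrl.le
    have hA := stepA (t • d₀) hnorm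
    have hB := Lpen_combo' E I g₀ g lam hlam zbar d₀ t ht0.le ht1
    have hfin : t * Jpen E I g₀ g lam zbar ≤ t * Lpen E I g₀ g lam zbar d₀ := by
      nlinarith
    exact le_of_mul_le_mul_left hfin ht0
end

section
/- (Recovery of KKT conditions at a feasible stationary point.) Let z̄ be a point at which g₀ and all g_i are differentiable. Suppose z̄ is feasible, i.e. g_i(z̄) = 0 for all i ∈ E and g_i(z̄) ≤ 0 for all i ∈ I, and suppose z̄ is stationary for the linearized problem in the sense that L_{z̄}(d) ≥ J(z̄) for all d ∈ ℝ^n. Then there exist multipliers μ_i (i ∈ E ∪ I) with |μ_i| ≤ λ_i for i ∈ E, 0 ≤ μ_i ≤ λ_i for i ∈ I, and μ_i = 0 whenever i ∈ I and g_i(z̄) < 0, such that ∇g₀(z̄) + Σ_{i∈E∪I} μ_i ∇g_i(z̄) = 0. -/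
open RealInnerProductSpace Metric Filter Topology Asymptotics

lemma hb_step {n : ℕ} (a b : EuclideanSpace ℝ (Fin n)) (l u : ℝ) (hlu : l ≤ u)
    (q : EuclideanSpace ℝ (Fin n) → ℝ)
    (hq_sub : ∀ x y, q (x + y) ≤ q x + q y)
    (hq_hom : ∀ (c : ℝ) x, 0 ≤ c → q (c • x) = c * q x)
    (h : ∀ d, -⟪a, d⟫ ≤ max (l * ⟪b, d⟫) (u * ⟪b, d⟫) + q d) :
    ∃ μ : ℝ, l ≤ μ ∧ μ ≤ u ∧ ∀ d, -⟪a + μ • b, d⟫ ≤ q d := by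
  by_cases hb : b = 0
  · refine ⟨l, le_refl _, hlu, fun d => ?_⟩
    have := h d
    simp [hb, inner_zero_left] at this ⊢
    simpa using this
  · -- b ≠ 0
    set T : Set ℝ := {x | ∃ w, ⟪b, w⟫ = 1 ∧ x = -⟪a, w⟫ - q w} with hT
    have hTne : T.Nonempty := by
      refine ⟨-⟪a, (‖b‖ ^ 2)⁻¹ • b⟫ - q ((‖b‖ ^ 2)⁻¹ • b), (‖b‖ ^ 2)⁻¹ • b, ?_, rfl⟩
      have hb' : ‖b‖ ≠ 0 := norm_ne_zero_iff.2 hb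
      rw [real_inner_smul_right, real_inner_self_eq_norm_sq]
      field_simp
    have hTu : ∀ x ∈ T, x ≤ u := by
      rintro x ⟨w, hw, rfl⟩
      have := h w
      rw [hw, mul_one, mul_one, max_eq_right hlu] at this
      linarith
    have hbdd : BddAbove T := ⟨u, fun x hx => hTu x hx⟩
    set M := sSup T with hM
    have hMu : M ≤ u := csSup_le hTne hTu
    refine ⟨max M l, le_max_right _ _, max_le hMu hlu, fun d => ?_⟩
    set μ := max M l with hμ
    have hzero : ∀ d, ⟪b, d⟫ = 0 → -⟪a, d⟫ ≤ q d := by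
      intro d hd
      have := h d
      rw [hd] at this; simpa using this
    rw [inner_add_left, real_inner_smul_left]
    rcases lt_trichotomy (⟪b, d⟫ : ℝ) 0 with ht | ht | ht
    · -- negative case
      set t : ℝ := ⟪b, d⟫ with htdef
      set v := (-t)⁻¹ • d with hv
      have hnt : (0:ℝ) < -t := by linarith
      have hbv : ⟪b, v⟫ = -1 := by
        rw [hv, real_inner_smul_right, ← htdef]
        field_simp
        rw [div_self (ne_of_lt ht)]
      have hup : μ ≤ ⟪a, v⟫ + q v := by
        have hl : l ≤ ⟪a, v⟫ + q v := by
          have := h v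
          rw [hbv] at this
          have hmax : max (l * (-1)) (u * (-1)) = -l := by
            rw [max_eq_left (by linarith)]; ring
          rw [hmax] at this; linarith
        have hMle : M ≤ ⟪a, v⟫ + q v := by
          apply csSup_le hTne
          rintro x ⟨w, hw, rfl⟩
          have hbwv : ⟪b, w + v⟫ = 0 := by rw [inner_add_right, hw, hbv]; ring
          have h1 := hzero (w + v) hbwv
          have h2 := hq_sub w v
          rw [inner_add_right] at h1
          linarith
        exact max_le hMle hl
      have hdv : (-t) • v = d := by
        rw [hv, smul_smul, mul_inv_cancel₀ (ne_of_gt hnt), one_smul]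
      have hqd : q d = (-t) * q v := by
        rw [← hdv]; exact hq_hom _ _ (le_of_lt hnt)
      have had : ⟪a, d⟫ = (-t) * ⟪a, v⟫ := by
        rw [← hdv, real_inner_smul_right]
      nlinarith [mul_le_mul_of_nonneg_left hup (le_of_lt hnt)]
    · rw [ht, mul_zero]
      simpa using hzero d ht
    · -- positive case
      set t : ℝ := ⟪b, d⟫ with htdef
      set w := t⁻¹ • d with hw
      have hbw : ⟪b, w⟫ = 1 := by
        rw [hw, real_inner_smul_right, ← htdef]
        field_simp
      have hle : -⟪a, w⟫ - q w ≤ μ :=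
        le_trans (le_csSup hbdd ⟨w, hbw, rfl⟩) (le_max_left _ _)
      have hdw : t • w = d := by
        rw [hw, smul_smul, mul_inv_cancel₀ (ne_of_gt ht), one_smul]
      have hqd : q d = t * q w := by
        rw [← hdw]; exact hq_hom _ _ (le_of_lt ht)
      have had : ⟪a, d⟫ = t * ⟪a, w⟫ := by
        rw [← hdw, real_inner_smul_right]
      nlinarith [mul_le_mul_of_nonneg_left hle (le_of_lt ht)]

lemma hb_key {n : ℕ} {ι : Type*} [DecidableEq ι] (S : Finset ι)
    (b : ι → EuclideanSpace ℝ (Fin n)) (l u : ι → ℝ) :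
    ∀ a : EuclideanSpace ℝ (Fin n), (∀ i ∈ S, l i ≤ u i) →
      (∀ d, -⟪a, d⟫ ≤ ∑ i ∈ S, max (l i * ⟪b i, d⟫) (u i * ⟪b i, d⟫)) →
      ∃ μ : ι → ℝ, (∀ i ∈ S, l i ≤ μ i ∧ μ i ≤ u i) ∧
        a + ∑ i ∈ S, μ i • b i = 0 := by
  induction S using Finset.induction with
  | empty =>
    intro a _ h
    refine ⟨fun _ => 0, by simp, ?_⟩
    have h1 := h (-a)
    rw [inner_neg_right] at h1
    simp only [Finset.sum_empty] at h1 ⊢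
    have : a = 0 := by
      have := real_inner_self_nonpos.mp (by linarith)
      exact this
    rw [this]; simp
  | @insert j S' hj ih =>
    intro a hlu h
    simp only [Finset.sum_insert hj] at h
    obtain ⟨μj, hμj1, hμj2, hμj3⟩ := hb_step a (b j) (l j) (u j)
      (hlu j (Finset.mem_insert_self j S'))
      (fun d => ∑ i ∈ S', max (l i * ⟪b i, d⟫) (u i * ⟪b i, d⟫))
      (fun x y => by
        rw [← Finset.sum_add_distrib]
        apply Finset.sum_le_sum
        intro i _
        rw [inner_add_right]
        exact max_le (by rw [mul_add]; exact add_le_add (le_max_left _ _) (le_max_left _ _))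
          (by rw [mul_add]; exact add_le_add (le_max_right _ _) (le_max_right _ _)))
      (fun c x hc => by
        rw [Finset.mul_sum]
        apply Finset.sum_congr rfl
        intro i _
        rw [real_inner_smul_right, mul_max_of_nonneg _ _ hc]
        ring_nf)
      h
    obtain ⟨μ', hμ'1, hμ'2⟩ := ih (a + μj • b j)
      (fun i hi => hlu i (Finset.mem_insert_of_mem hi)) hμj3
    refine ⟨Function.update μ' j μj, ?_, ?_⟩
    · intro i hi
      rcases Finset.mem_insert.mp hi with rfl | hi'
      · rw [Function.update_self]; exact ⟨hμj1, hμj2⟩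
      · rw [Function.update_of_ne (by rintro rfl; exact hj hi')]
        exact hμ'1 i hi' 
    · rw [Finset.sum_insert hj, Function.update_self]
      have : ∑ i ∈ S', Function.update μ' j μj i • b i = ∑ i ∈ S', μ' i • b i := by
        apply Finset.sum_congr rfl
        intro i hi
        rw [Function.update_of_ne (by rintro rfl; exact hj hi)]
      rw [this, ← add_assoc]
      exact hμ'2
theorem stmt7 {n : ℕ} {ι : Type*} [DecidableEq ι] (E I : Finset ι) (hEI : Disjoint E I)
    (g₀ : EuclideanSpace ℝ (Fin n) → ℝ) (g : ι → EuclideanSpace ℝ (Fin n) → ℝ)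
    (lam : ι → ℝ) (hlam : ∀ i ∈ E ∪ I, 0 ≤ lam i)
    (zbar : EuclideanSpace ℝ (Fin n))
    (hg₀ : DifferentiableAt ℝ g₀ zbar) (hg : ∀ i ∈ E ∪ I, DifferentiableAt ℝ (g i) zbar)
    (hfeasE : ∀ i ∈ E, g i zbar = 0) (hfeasI : ∀ i ∈ I, g i zbar ≤ 0)
    (hstat : ∀ d : EuclideanSpace ℝ (Fin n),
      Lpen E I g₀ g lam zbar d ≥ Jpen E I g₀ g lam zbar) :
    ∃ μ : ι → ℝ,
      (∀ i ∈ E, |μ i| ≤ lam i) ∧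
      (∀ i ∈ I, 0 ≤ μ i ∧ μ i ≤ lam i) ∧
      (∀ i ∈ I, g i zbar < 0 → μ i = 0) ∧
      gradient g₀ zbar + ∑ i ∈ E ∪ I, μ i • gradient (g i) zbar = 0 := by
  classical
  set a := gradient g₀ zbar with ha
  set b : ι → EuclideanSpace ℝ (Fin n) := fun i => gradient (g i) zbar with hbdef
  have hJ : Jpen E I g₀ g lam zbar = g₀ zbar := by
    unfold Jpen
    rw [Finset.sum_eq_zero (fun i hi => by rw [hfeasE i hi]; simp),
      Finset.sum_eq_zero (fun i hi => by rw [max_eq_left (hfeasI i hi)]; simp)]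
    ring
  set A := I.filter (fun i => g i zbar = 0) with hAdef
  set K := I.filter (fun i => ¬ g i zbar = 0) with hKdef
  have hAI : A ⊆ I := Finset.filter_subset _ _
  have hKneg : ∀ i ∈ K, g i zbar < 0 := fun i hi =>
    lt_of_le_of_ne (hfeasI i (Finset.mem_filter.mp hi).1) (Finset.mem_filter.mp hi).2
  -- core homogeneous inequality
  have hcore : ∀ d, 0 ≤ ⟪a, d⟫ + ∑ i ∈ E, lam i * |⟪b i, d⟫| +
      ∑ i ∈ A, lam i * max 0 ⟪b i, d⟫ := by
    intro d
    -- choose a small positive scaling s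
    obtain ⟨s, hs, hsK⟩ : ∃ s : ℝ, 0 < s ∧ ∀ i ∈ K, g i zbar + s * ⟪b i, d⟫ ≤ 0 := by
      by_cases hKne : K.Nonempty
      · set δ := K.inf' hKne (fun i => -(g i zbar)) with hδ
        set B := K.sup' hKne (fun i => |⟪b i, d⟫|) with hB
        have hδpos : 0 < δ := by
          rw [hδ, Finset.lt_inf'_iff]
          intro i hi; linarith [hKneg i hi]
        have hB0 : 0 ≤ B := by
          obtain ⟨i0, hi0⟩ := hKne
          exact le_trans (abs_nonneg _) (Finset.le_sup' (fun i => |⟪b i, d⟫|) hi0)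
        refine ⟨δ / (B + 1), div_pos hδpos (by linarith), fun i hi => ?_⟩
        have h1 : |⟪b i, d⟫| ≤ B := Finset.le_sup' (fun i => |⟪b i, d⟫|) hi
        have h2 : δ ≤ -(g i zbar) := Finset.inf'_le _ hi
        have h3 : (⟪b i, d⟫ : ℝ) ≤ |⟪b i, d⟫| := le_abs_self _
        have h4 : δ / (B + 1) * ⟪b i, d⟫ ≤ δ / (B + 1) * (B + 1) := by
          apply mul_le_mul_of_nonneg_left (by linarith) (le_of_lt (div_pos hδpos (by linarith)))
        rw [div_mul_cancel₀ _ (by linarith : B + 1 ≠ 0)] at h4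
        linarith
      · exact ⟨1, one_pos, fun i hi => absurd ⟨i, hi⟩ hKne⟩
    have hst := hstat (s • d)
    rw [ge_iff_le, hJ] at hst
    unfold Lpen at hst
    have hE : ∑ i ∈ E, lam i * |g i zbar + ⟪b i, s • d⟫| =
        s * ∑ i ∈ E, lam i * |⟪b i, d⟫| := by
      rw [Finset.mul_sum]
      apply Finset.sum_congr rfl
      intro i hi
      rw [hfeasE i hi, zero_add, real_inner_smul_right, abs_mul, abs_of_nonneg hs.le]
      ring
    have hI' : ∑ i ∈ I, lam i * max 0 (g i zbar + ⟪b i, s • d⟫) =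
        s * ∑ i ∈ A, lam i * max 0 ⟪b i, d⟫ := by
      rw [← Finset.sum_filter_add_sum_filter_not I (fun i => g i zbar = 0), ← hAdef, ← hKdef]
      have h2 : ∑ i ∈ K, lam i * max 0 (g i zbar + ⟪b i, s • d⟫) = 0 := by
        apply Finset.sum_eq_zero
        intro i hi
        rw [real_inner_smul_right, max_eq_left (hsK i hi), mul_zero]
      have h1 : ∑ i ∈ A, lam i * max 0 (g i zbar + ⟪b i, s • d⟫) =
          s * ∑ i ∈ A, lam i * max 0 ⟪b i, d⟫ := by
        rw [Finset.mul_sum]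
        apply Finset.sum_congr rfl
        intro i hi
        have hmax : (0:ℝ) ⊔ (s * ⟪b i, d⟫) = s * (0 ⊔ ⟪b i, d⟫) := by
          rw [mul_max_of_nonneg _ _ hs.le, mul_zero]
        rw [(Finset.mem_filter.mp hi).2, zero_add, real_inner_smul_right, hmax]
        ring
      rw [h1, h2, add_zero]
    rw [hE, hI', real_inner_smul_right] at hst
    have hX : 0 ≤ s * (⟪a, d⟫ + ∑ i ∈ E, lam i * |⟪b i, d⟫| +
        ∑ i ∈ A, lam i * max 0 ⟪b i, d⟫) := by
      have : g₀ zbar ≤ g₀ zbar + s * ⟪a, d⟫ + s * (∑ i ∈ E, lam i * |⟪b i, d⟫|) +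
          s * (∑ i ∈ A, lam i * max 0 ⟪b i, d⟫) := hst
      nlinarith [this]
    by_contra hcon
    push_neg at hcon
    nlinarith [mul_pos hs (neg_pos.2 hcon)]
  -- apply the abstract Farkas-type lemma
  set l : ι → ℝ := fun i => if i ∈ E then -(lam i) else 0 with hldef
  have hlamE : ∀ i ∈ E, 0 ≤ lam i := fun i hi => hlam i (Finset.mem_union_left _ hi)
  have hlamI : ∀ i ∈ I, 0 ≤ lam i := fun i hi => hlam i (Finset.mem_union_right _ hi)
  have hdisjEA : Disjoint E A := hEI.mono_right hAI
  have hsum : ∀ d, -⟪a, d⟫ ≤ ∑ i ∈ E ∪ A, max (l i * ⟪b i, d⟫) (lam i * ⟪b i, d⟫) := by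
    intro d
    rw [Finset.sum_union hdisjEA]
    have hEeq : ∑ i ∈ E, max (l i * ⟪b i, d⟫) (lam i * ⟪b i, d⟫) =
        ∑ i ∈ E, lam i * |⟪b i, d⟫| := by
      apply Finset.sum_congr rfl
      intro i hi
      rw [hldef]
      simp only [if_pos hi]
      rw [neg_mul, max_comm, ← abs_eq_max_neg, abs_mul, abs_of_nonneg (hlamE i hi)]
    have hAeq : ∑ i ∈ A, max (l i * ⟪b i, d⟫) (lam i * ⟪b i, d⟫) =
        ∑ i ∈ A, lam i * max 0 ⟪b i, d⟫ := by
      apply Finset.sum_congr rfl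
      intro i hi
      have hiE : i ∉ E := Finset.disjoint_left.mp hdisjEA |>.mt (fun h => h hi) |> fun _ => 
        (Finset.disjoint_right.mp hdisjEA hi)
      rw [hldef]
      simp only [if_neg hiE, zero_mul]
      rw [mul_max_of_nonneg _ _ (hlamI i (hAI hi)), mul_zero]
    rw [hEeq, hAeq]
    linarith [hcore d]
  have hlu : ∀ i ∈ E ∪ A, l i ≤ lam i := by
    intro i hi
    rw [hldef]
    by_cases hiE : i ∈ E
    · simp only [if_pos hiE]; linarith [hlamE i hiE]
    · simp only [if_neg hiE]
      rcases Finset.mem_union.mp hi with h | h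
      · exact absurd h hiE
      · exact hlamI i (hAI h)
  obtain ⟨μ', hμ'1, hμ'2⟩ := hb_key (E ∪ A) b l lam a hlu hsum
  refine ⟨fun i => if i ∈ E ∪ A then μ' i else 0, ?_, ?_, ?_, ?_⟩
  · intro i hi
    have hiEA : i ∈ E ∪ A := Finset.mem_union_left _ hi
    simp only [if_pos hiEA]
    obtain ⟨h1, h2⟩ := hμ'1 i hiEA
    rw [hldef] at h1
    simp only [if_pos hi] at h1
    exact abs_le.mpr ⟨by linarith, h2⟩
  · intro i hi
    by_cases hiA : i ∈ A
    · have hiEA : i ∈ E ∪ A := Finset.mem_union_right _ hiA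
      simp only [if_pos hiEA]
      obtain ⟨h1, h2⟩ := hμ'1 i hiEA
      have hiE : i ∉ E := Finset.disjoint_right.mp hEI hi
      rw [hldef] at h1
      simp only [if_neg hiE] at h1
      exact ⟨h1, h2⟩
    · have hiEA : i ∉ E ∪ A := by
        rw [Finset.mem_union]
        push_neg
        exact ⟨Finset.disjoint_right.mp hEI hi, hiA⟩
      simp only [if_neg hiEA]
      exact ⟨le_refl 0, hlamI i hi⟩
  · intro i hi hneg
    have hiEA : i ∉ E ∪ A := by
      rw [Finset.mem_union]
      push_neg
      refine ⟨Finset.disjoint_right.mp hEI hi, ?_⟩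
      rw [hAdef, Finset.mem_filter]
      push_neg
      exact fun _ => ne_of_lt hneg
    simp only [if_neg hiEA]
  · have hsub : E ∪ A ⊆ E ∪ I := Finset.union_subset_union_right hAI
    have heq : ∑ i ∈ E ∪ I, (if i ∈ E ∪ A then μ' i else 0) • b i =
        ∑ i ∈ E ∪ A, μ' i • b i := by
      rw [← Finset.sum_subset hsub (fun i _ hni => by rw [if_neg hni, zero_smul])]
      apply Finset.sum_congr rfl
      intro i hi
      rw [if_pos hi]
    rw [heq]
    exact hμ'2
end

section
/- (Sufficient decrease condition H1.) Assume g₀ and all g_i are differentiable with Lipschitz continuous gradients on ℝ^n. Let z̄ ∈ ℝ^n and suppose there exist a unit vector s ∈ ℝ^n, κ > 0, and ε₀ > 0 such that J(z + δ s) − J(z) < −(κ/2)δ for all z with ‖z − z̄‖ < ε₀ and all δ ∈ (0, ε₀]. Then there exist a > 0, r̄ > 0 and ε̄ > 0 such that for every z with ‖z − z̄‖ < ε̄, every r ∈ (0, r̄], and every d* minimizing L_z over the closed ball {d : ‖d‖ ≤ r}, one has J(z) − J(z + d*) ≥ a ‖d*‖². -/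
open RealInnerProductSpace Metric Filter Topology Asymptotics

lemma taylor_bound8 {n : ℕ} (f : EuclideanSpace ℝ (Fin n) → ℝ) (hf : Differentiable ℝ f)
    (K : NNReal) (hK : LipschitzWith K (gradient f)) (z d : EuclideanSpace ℝ (Fin n)) :
    |f (z + d) - f z - ⟪gradient f z, d⟫| ≤ K * ‖d‖ ^ 2 := by
  have hderiv : ∀ t : ℝ, HasDerivAt (fun t : ℝ => f (z + t • d) - t * ⟪gradient f z, d⟫)
      (⟪gradient f (z + t • d) - gradient f z, d⟫) t := by
    intro t
    have h1 : HasDerivAt (fun t : ℝ => z + t • d) d t := by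
      simpa using ((hasDerivAt_id t).smul_const d).const_add z
    have h2 : HasDerivAt (fun t : ℝ => f (z + t • d)) (⟪gradient f (z + t • d), d⟫) t := by
      have h3 := ((hf (z + t • d)).hasGradientAt.hasFDerivAt).comp_hasDerivAt t h1
      simpa [InnerProductSpace.toDual_apply_apply, Function.comp_def] using h3
    simpa [inner_sub_left, mul_comm, Pi.sub_def] using h2.sub ((hasDerivAt_id t).const_mul (⟪gradient f z, d⟫ : ℝ))
  have hbound : ∀ t ∈ Set.Icc (0:ℝ) 1, ‖⟪gradient f (z + t • d) - gradient f z, d⟫‖ ≤ K * ‖d‖ ^ 2 := by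
    intro t ht
    calc ‖(⟪gradient f (z + t • d) - gradient f z, d⟫ : ℝ)‖
        ≤ ‖gradient f (z + t • d) - gradient f z‖ * ‖d‖ := norm_inner_le_norm _ _
      _ ≤ (K * ‖t • d‖) * ‖d‖ := by
          gcongr
          simpa [dist_eq_norm] using hK.dist_le_mul (z + t • d) z
      _ ≤ (K * (1 * ‖d‖)) * ‖d‖ := by
          gcongr
          rw [norm_smul]
          gcongr
          simpa [Real.norm_eq_abs, abs_of_nonneg ht.1] using ht.2
      _ = K * ‖d‖ ^ 2 := by ring
  have := Convex.norm_image_sub_le_of_norm_hasDerivWithin_le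
    (f := fun t : ℝ => f (z + t • d) - t * ⟪gradient f z, d⟫)
    (f' := fun t => ⟪gradient f (z + t • d) - gradient f z, d⟫)
    (s := Set.Icc (0:ℝ) 1) (C := K * ‖d‖ ^ 2)
    (fun t _ => (hderiv t).hasDerivWithinAt) hbound (convex_Icc 0 1)
    (Set.left_mem_Icc.2 zero_le_one) (Set.right_mem_Icc.2 zero_le_one)
  simpa [Real.norm_eq_abs, sub_sub, add_comm] using this

theorem stmt8 {n : ℕ} {ι : Type*} [DecidableEq ι] (E I : Finset ι) (hEI : Disjoint E I)
    (g₀ : EuclideanSpace ℝ (Fin n) → ℝ) (g : ι → EuclideanSpace ℝ (Fin n) → ℝ)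
    (lam : ι → ℝ) (hlam : ∀ i ∈ E ∪ I, 0 ≤ lam i)
    (hg₀ : Differentiable ℝ g₀) (hg₀' : ∃ K : NNReal, LipschitzWith K (gradient g₀))
    (hg : ∀ i ∈ E ∪ I, Differentiable ℝ (g i))
    (hg' : ∀ i ∈ E ∪ I, ∃ K : NNReal, LipschitzWith K (gradient (g i)))
    (zbar s : EuclideanSpace ℝ (Fin n)) (hs : ‖s‖ = 1)
    (κ ε₀ : ℝ) (hκ : 0 < κ) (hε₀ : 0 < ε₀)
    (hdesc : ∀ z : EuclideanSpace ℝ (Fin n), ‖z - zbar‖ < ε₀ → ∀ δ : ℝ, 0 < δ → δ ≤ ε₀ →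
      Jpen E I g₀ g lam (z + δ • s) - Jpen E I g₀ g lam z < -(κ / 2) * δ) :
    ∃ a > (0 : ℝ), ∃ rbar > (0 : ℝ), ∃ εbar > (0 : ℝ),
      ∀ z : EuclideanSpace ℝ (Fin n), ‖z - zbar‖ < εbar →
        ∀ r : ℝ, 0 < r → r ≤ rbar →
          ∀ dstar ∈ closedBall (0 : EuclideanSpace ℝ (Fin n)) r,
            IsMinOn (Lpen E I g₀ g lam z) (closedBall 0 r) dstar →
            Jpen E I g₀ g lam z - Jpen E I g₀ g lam (z + dstar) ≥ a * ‖dstar‖ ^ 2 := by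
  classical
  obtain ⟨K₀, hK₀⟩ := hg₀'
  have hg'' : ∀ i : ι, ∃ K : NNReal, i ∈ E ∪ I → LipschitzWith K (gradient (g i)) := by
    intro i
    by_cases h : i ∈ E ∪ I
    · exact ⟨(hg' i h).choose, fun _ => (hg' i h).choose_spec⟩
    · exact ⟨0, fun h' => absurd h' h⟩
  choose K hK using hg''
  set C : ℝ := (K₀ : ℝ) + ∑ i ∈ E ∪ I, lam i * (K i : ℝ) with hCdef
  have hC : 0 ≤ C := by
    apply add_nonneg K₀.coe_nonneg
    exact Finset.sum_nonneg fun i hi => mul_nonneg (hlam i hi) (K i).coe_nonneg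
  -- the key quadratic approximation bound
  have key : ∀ z d : EuclideanSpace ℝ (Fin n),
      |Jpen E I g₀ g lam (z + d) - Lpen E I g₀ g lam z d| ≤ C * ‖d‖ ^ 2 := by
    intro z d
    have hEterm : ∀ i ∈ E, abs (lam i * |g i (z + d)| - lam i * |g i z + ⟪gradient (g i) z, d⟫|)
        ≤ lam i * (K i : ℝ) * ‖d‖ ^ 2 := by
      intro i hi
      have hi' : i ∈ E ∪ I := Finset.mem_union_left _ hi
      have ht := taylor_bound8 (g i) (hg i hi') (K i) (hK i hi') z d
      have h1 : abs (|g i (z + d)| - |g i z + ⟪gradient (g i) z, d⟫|)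
          ≤ |g i (z + d) - g i z - ⟪gradient (g i) z, d⟫| := by
        have := abs_abs_sub_abs_le_abs_sub (g i (z + d)) (g i z + ⟪gradient (g i) z, d⟫)
        rw [sub_sub]; exact this
      rw [← mul_sub, abs_mul, abs_of_nonneg (hlam i hi')]
      calc lam i * abs (|g i (z + d)| - |g i z + ⟪gradient (g i) z, d⟫|)
          ≤ lam i * ((K i : ℝ) * ‖d‖ ^ 2) := by
            exact mul_le_mul_of_nonneg_left (h1.trans ht) (hlam i hi')
        _ = lam i * (K i : ℝ) * ‖d‖ ^ 2 := by ring
    have hIterm : ∀ i ∈ I, |lam i * max 0 (g i (z + d)) - lam i * max 0 (g i z + ⟪gradient (g i) z, d⟫)|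
        ≤ lam i * (K i : ℝ) * ‖d‖ ^ 2 := by
      intro i hi
      have hi' : i ∈ E ∪ I := Finset.mem_union_right _ hi
      have ht := taylor_bound8 (g i) (hg i hi') (K i) (hK i hi') z d
      have h1 : |max 0 (g i (z + d)) - max 0 (g i z + ⟪gradient (g i) z, d⟫)|
          ≤ |g i (z + d) - g i z - ⟪gradient (g i) z, d⟫| := by
        rw [max_comm 0 (g i (z + d)), max_comm 0 _]
        have := abs_max_sub_max_le_abs (g i (z + d)) (g i z + ⟪gradient (g i) z, d⟫) 0
        rw [sub_sub]; exact this
      rw [← mul_sub, abs_mul, abs_of_nonneg (hlam i hi')]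
      calc lam i * |max 0 (g i (z + d)) - max 0 (g i z + ⟪gradient (g i) z, d⟫)|
          ≤ lam i * ((K i : ℝ) * ‖d‖ ^ 2) := mul_le_mul_of_nonneg_left (h1.trans ht) (hlam i hi')
        _ = lam i * (K i : ℝ) * ‖d‖ ^ 2 := by ring
    have h0 := taylor_bound8 g₀ hg₀ K₀ hK₀ z d
    have hsplit : Jpen E I g₀ g lam (z + d) - Lpen E I g₀ g lam z d =
        (g₀ (z + d) - g₀ z - ⟪gradient g₀ z, d⟫)
        + ∑ i ∈ E, (lam i * |g i (z + d)| - lam i * |g i z + ⟪gradient (g i) z, d⟫|)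
        + ∑ i ∈ I, (lam i * max 0 (g i (z + d)) - lam i * max 0 (g i z + ⟪gradient (g i) z, d⟫)) := by
      simp only [Jpen, Lpen, Finset.sum_sub_distrib]; ring
    rw [hsplit]
    have hCsum : C * ‖d‖ ^ 2 = (K₀ : ℝ) * ‖d‖ ^ 2
        + ∑ i ∈ E, lam i * (K i : ℝ) * ‖d‖ ^ 2
        + ∑ i ∈ I, lam i * (K i : ℝ) * ‖d‖ ^ 2 := by
      rw [hCdef, Finset.sum_union hEI, ← Finset.sum_mul, ← Finset.sum_mul]; ring
    rw [hCsum]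
    calc |_ + _ + _| ≤ |g₀ (z + d) - g₀ z - ⟪gradient g₀ z, d⟫|
        + |∑ i ∈ E, (lam i * |g i (z + d)| - lam i * |g i z + ⟪gradient (g i) z, d⟫|)|
        + |∑ i ∈ I, (lam i * max 0 (g i (z + d)) - lam i * max 0 (g i z + ⟪gradient (g i) z, d⟫))| :=
          (abs_add_le _ _).trans (by gcongr; exact abs_add_le _ _)
      _ ≤ (K₀ : ℝ) * ‖d‖ ^ 2 + ∑ i ∈ E, lam i * (K i : ℝ) * ‖d‖ ^ 2
          + ∑ i ∈ I, lam i * (K i : ℝ) * ‖d‖ ^ 2 := by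
          refine add_le_add (add_le_add h0 ?_) ?_
          · exact (Finset.abs_sum_le_sum_abs _ _).trans (Finset.sum_le_sum hEterm)
          · exact (Finset.abs_sum_le_sum_abs _ _).trans (Finset.sum_le_sum hIterm)
  -- choose the constants
  refine ⟨1, one_pos, min ε₀ (κ / (2 * (2 * C + 1))), ?_, ε₀, hε₀, ?_⟩
  · exact lt_min hε₀ (div_pos hκ (by positivity))
  intro z hz r hr hrbar dstar hdball hmin
  rcases eq_or_ne dstar 0 with h0 | h0
  · simp [h0]
  have hδ : 0 < ‖dstar‖ := norm_pos_iff.2 h0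
  have hδr : ‖dstar‖ ≤ r := by simpa [dist_zero_right] using mem_closedBall.1 hdball
  have hδrb : ‖dstar‖ ≤ κ / (2 * (2 * C + 1)) := hδr.trans (hrbar.trans (min_le_right _ _))
  have hδε₀ : ‖dstar‖ ≤ ε₀ := hδr.trans (hrbar.trans (min_le_left _ _))
  have hmem : ‖dstar‖ • s ∈ closedBall (0 : EuclideanSpace ℝ (Fin n)) r := by
    simp only [mem_closedBall, dist_zero_right, norm_smul, Real.norm_eq_abs,
      abs_of_nonneg hδ.le, hs, mul_one]
    exact hδr
  have h2 : Lpen E I g₀ g lam z dstar ≤ Lpen E I g₀ g lam z (‖dstar‖ • s) := hmin hmem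
  have h3 := hdesc z hz ‖dstar‖ hδ hδε₀
  have hns : ‖‖dstar‖ • s‖ = ‖dstar‖ := by
    rw [norm_smul, Real.norm_eq_abs, abs_of_nonneg hδ.le, hs, mul_one]
  have h4 := key z (‖dstar‖ • s)
  rw [hns] at h4
  have h5 := key z dstar
  rw [abs_le] at h4 h5
  have hfact : ‖dstar‖ * (2 * (2 * C + 1)) ≤ κ :=
    (le_div_iff₀ (by positivity)).1 hδrb
  rw [ge_iff_le, one_mul]
  nlinarith [h2, h3, h4.1, h5.2, hδ, hC,
    mul_nonneg (sub_nonneg.2 hfact) hδ.le]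
end

section
/- (Sharp local growth of the exact penalty function.) Assume g₀ and all g_i are differentiable at z̄, and that z̄ is feasible: g_i(z̄) = 0 for all i ∈ E and g_i(z̄) ≤ 0 for all i ∈ I. Let A := {i ∈ I : g_i(z̄) = 0} be the active inequality set. Suppose there exist multipliers μ_i (i ∈ E ∪ A) satisfying: (i) the KKT equation ∇g₀(z̄) + Σ_{i∈E∪A} μ_i ∇g_i(z̄) = 0; (ii) strict exactness λ_i > |μ_i| for i ∈ E; (iii) strict complementarity with exactness 0 < μ_i < λ_i for i ∈ A; and suppose (iv) the family of gradients {∇g_i(z̄) : i ∈ E ∪ A} spans ℝ^n. Then there exist β > 0 and δ > 0 such that J(z) − J(z̄) ≥ β ‖z − z̄‖ for every z with ‖z − z̄‖ ≤ δ. -/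
set_option maxHeartbeats 1000000


open RealInnerProductSpace

theorem stmt13 {n : ℕ} {ι : Type*} [DecidableEq ι] (E I : Finset ι) (hEI : Disjoint E I)
    (g₀ : EuclideanSpace ℝ (Fin n) → ℝ) (g : ι → EuclideanSpace ℝ (Fin n) → ℝ)
    (lam : ι → ℝ) (hlam : ∀ i ∈ E ∪ I, 0 ≤ lam i)
    (zbar : EuclideanSpace ℝ (Fin n))
    (hg₀ : DifferentiableAt ℝ g₀ zbar) (hg : ∀ i ∈ E ∪ I, DifferentiableAt ℝ (g i) zbar)
    (hfeasE : ∀ i ∈ E, g i zbar = 0) (hfeasI : ∀ i ∈ I, g i zbar ≤ 0)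
    (A : Finset ι) (hA : ∀ i, i ∈ A ↔ i ∈ I ∧ g i zbar = 0)
    (μ : ι → ℝ)
    (hkkt : gradient g₀ zbar + ∑ i ∈ E ∪ A, μ i • gradient (g i) zbar = 0)
    (hexactE : ∀ i ∈ E, |μ i| < lam i)
    (hexactA : ∀ i ∈ A, 0 < μ i ∧ μ i < lam i)
    (hspan : Submodule.span ℝ ((fun i => gradient (g i) zbar) '' ↑(E ∪ A)) = ⊤) :
    ∃ β > (0 : ℝ), ∃ δ > (0 : ℝ),
      ∀ z : EuclideanSpace ℝ (Fin n), ‖z - zbar‖ ≤ δ →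
        Jpen E I g₀ g lam z - Jpen E I g₀ g lam zbar ≥ β * ‖z - zbar‖ := by
  classical
  set G : ι → (EuclideanSpace ℝ (Fin n)) := fun i => gradient (g i) zbar with hGdef
  have hAI : A ⊆ I := fun i hi => ((hA i).1 hi).1
  have hEA : Disjoint E A := hEI.mono_right hAI
  have hEAEI : (E ∪ A : Finset ι) ⊆ E ∪ I := Finset.union_subset_union_right hAI
  have hgzbar : ∀ i ∈ E ∪ A, g i zbar = 0 := by
    intro i hi
    rcases Finset.mem_union.1 hi with h | h
    · exact hfeasE i h
    · exact ((hA i).1 h).2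
  -- Step 1: the linear map h ↦ (⟪G i, h⟫)_{i ∈ E∪A} is injective, hence antilipschitz
  obtain ⟨K, hK0, hKS⟩ :
      ∃ K : ℝ, 0 < K ∧ ∀ h : (EuclideanSpace ℝ (Fin n)), ‖h‖ ≤ K * ∑ i ∈ E ∪ A, |⟪G i, h⟫| := by
    set T : (EuclideanSpace ℝ (Fin n)) →ₗ[ℝ] ((E ∪ A : Finset ι) → ℝ) :=
      LinearMap.pi (fun i : (E ∪ A : Finset ι) => (innerSL ℝ (G i.1)).toLinearMap) with hT
    have hker : LinearMap.ker T = ⊥ := by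
      rw [LinearMap.ker_eq_bot']
      intro h hh
      have hall : ∀ i ∈ E ∪ A, ⟪G i, h⟫ = 0 := by
        intro i hi
        have := congrFun hh ⟨i, hi⟩
        simpa [T] using this
      have hperp : ∀ v ∈ Submodule.span ℝ ((fun i => gradient (g i) zbar) '' ↑(E ∪ A)),
          ⟪v, h⟫ = 0 := by
        intro v hv
        induction hv using Submodule.span_induction with
        | mem x hx =>
          obtain ⟨i, hi, rfl⟩ := hx
          exact hall i hi
        | zero => simp
        | add x y hx hy ihx ihy => rw [inner_add_left, ihx, ihy]; ring
        | smul a x hx ihx => rw [real_inner_smul_left, ihx]; ring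
      have : ⟪h, h⟫ = 0 := hperp h (by rw [hspan]; trivial)
      exact inner_self_eq_zero.1 this
    obtain ⟨K, hK0, hKa⟩ := T.exists_antilipschitzWith hker
    refine ⟨K, hK0, fun h => ?_⟩
    have h1 : ‖h‖ ≤ K * ‖T h‖ := by
      have := hKa.le_mul_dist h 0
      simpa [dist_zero_right, map_zero] using this
    have h2 : ‖T h‖ ≤ ∑ i ∈ E ∪ A, |⟪G i, h⟫| := by
      have hnn : (0 : ℝ) ≤ ∑ i ∈ E ∪ A, |⟪G i, h⟫| :=
        Finset.sum_nonneg fun i _ => abs_nonneg _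
      rw [pi_norm_le_iff_of_nonneg hnn]
      intro i
      have : |⟪G i.1, h⟫| ≤ ∑ j ∈ E ∪ A, |⟪G j, h⟫| :=
        Finset.single_le_sum (f := fun j => |⟪G j, h⟫|) (fun j _ => abs_nonneg _) i.2
      simpa [T, Real.norm_eq_abs] using this
    calc ‖h‖ ≤ K * ‖T h‖ := h1
      _ ≤ K * ∑ i ∈ E ∪ A, |⟪G i, h⟫| :=
        mul_le_mul_of_nonneg_left h2 (by positivity)
  -- Step 2: constants
  set c : ι → ℝ := fun i => if i ∈ E then lam i - |μ i| else min (μ i) (lam i - μ i) with hc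
  have hcpos : ∀ i ∈ E ∪ A, 0 < c i := by
    intro i hi
    rcases Finset.mem_union.1 hi with h | h
    · have := hexactE i h
      simp only [hc, if_pos h]
      linarith
    · have hiE : i ∉ E := Finset.disjoint_right.1 hEA h
      obtain ⟨h1, h2⟩ := hexactA i h
      simp only [hc, if_neg hiE, lt_min_iff]
      exact ⟨h1, by linarith⟩
  set cmin : ℝ := if hne : (E ∪ A).Nonempty then (E ∪ A).inf' hne c else 1 with hcmin
  have hcmin0 : 0 < cmin := by
    rw [hcmin]
    split_ifs with hne
    · exact (Finset.lt_inf'_iff hne).2 (fun i hi => hcpos i hi)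
    · norm_num
  have hcminle : ∀ i ∈ E ∪ A, cmin ≤ c i := by
    intro i hi
    rw [hcmin]
    rw [dif_pos ⟨i, hi⟩]
    exact Finset.inf'_le c hi
  set L : ℝ := ∑ i ∈ E ∪ A, lam i with hL
  have hL0 : 0 ≤ L := Finset.sum_nonneg fun i hi => hlam i (hEAEI hi)
  set ε : ℝ := cmin * K⁻¹ / (2 * (L + 1)) with hε
  have hε0 : 0 < ε := by positivity
  set β : ℝ := cmin * K⁻¹ / 2 with hβ
  have hβ0 : 0 < β := by positivity
  -- Step 3: choose δ using differentiability
  have hev : ∀ᶠ z in nhds zbar,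
      ((∀ i ∈ E ∪ A, |g i z - g i zbar - ⟪G i, z - zbar⟫| ≤ ε * ‖z - zbar‖) ∧
       (∀ i ∈ I \ A, g i z ≤ 0)) ∧
      |g₀ z - g₀ zbar - ⟪gradient g₀ zbar, z - zbar⟫| ≤ ε * ‖z - zbar‖ := by
    refine Filter.Eventually.and (Filter.Eventually.and ?_ ?_) ?_
    · rw [Filter.eventually_all_finset]
      intro i hi
      have hd := (hg i (hEAEI hi)).hasGradientAt
      have hlo := hasGradientAt_iff_isLittleO.1 hd
      have := hlo.def hε0
      filter_upwards [this] with z hz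
      simpa [Real.norm_eq_abs, G] using hz
    · rw [Filter.eventually_all_finset]
      intro i hi
      obtain ⟨hiI, hiA⟩ := Finset.mem_sdiff.1 hi
      have hlt : g i zbar < 0 := by
        rcases lt_or_eq_of_le (hfeasI i hiI) with h | h
        · exact h
        · exact absurd ((hA i).2 ⟨hiI, h⟩) hiA
      have hcont : ContinuousAt (g i) zbar := (hg i (Finset.mem_union_right _ hiI)).continuousAt
      filter_upwards [hcont.tendsto.eventually (gt_mem_nhds hlt)] with z hz
      exact le_of_lt hz
    · have hd := hg₀.hasGradientAt
      have hlo := hasGradientAt_iff_isLittleO.1 hd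
      have := hlo.def hε0
      filter_upwards [this] with z hz
      simpa [Real.norm_eq_abs] using hz
  obtain ⟨δ, hδ0, hδ⟩ := Metric.eventually_nhds_iff.1 hev
  refine ⟨β, hβ0, δ / 2, by positivity, fun z hz => ?_⟩
  have hzδ : dist z zbar < δ := by
    rw [dist_eq_norm]; linarith
  obtain ⟨⟨hP1, hP2⟩, hP0⟩ := hδ hzδ
  set r : ℝ := ‖z - zbar‖ with hr
  have hr0 : 0 ≤ r := norm_nonneg _
  set s : ι → ℝ := fun i => ⟪G i, z - zbar⟫ with hs
  -- value at zbar
  have hJbar : Jpen E I g₀ g lam zbar = g₀ zbar := by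
    unfold Jpen
    rw [Finset.sum_eq_zero (fun i hi => by rw [hfeasE i hi]; simp),
        Finset.sum_eq_zero (fun i hi => by rw [max_eq_left (hfeasI i hi)]; ring)]
    ring
  -- inequality for the inequality-constraint sum
  have hIA : ∑ i ∈ A, lam i * max 0 (g i z) ≤ ∑ i ∈ I, lam i * max 0 (g i z) :=
    Finset.sum_le_sum_of_subset_of_nonneg hAI
      (fun i hi _ => mul_nonneg (hlam i (Finset.mem_union_right _ hi)) (le_max_left _ _))
  -- KKT identity
  have hkkt' : ⟪gradient g₀ zbar, z - zbar⟫ = -∑ i ∈ E ∪ A, μ i * s i := by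
    have h1 : gradient g₀ zbar = -∑ i ∈ E ∪ A, μ i • G i :=
      eq_neg_of_add_eq_zero_left hkkt
    rw [h1, inner_neg_left, sum_inner]
    congr 1
    exact Finset.sum_congr rfl fun i _ => by rw [real_inner_smul_left]
  -- bound on g₀
  have hg0bd : g₀ z - g₀ zbar ≥ -(∑ i ∈ E ∪ A, μ i * s i) - ε * r := by
    have := abs_le.1 hP0
    rw [hkkt'] at this
    linarith [this.1]
  -- per-index bound
  have hterm : ∀ i ∈ E ∪ A,
      (if i ∈ E then lam i * |g i z| else lam i * max 0 (g i z)) - μ i * s i ≥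
        c i * |s i| - lam i * (ε * r) := by
    intro i hi
    have he : |g i z - s i| ≤ ε * r := by
      have := hP1 i hi
      rwa [hgzbar i hi, sub_zero] at this
    have hlami : 0 ≤ lam i := hlam i (hEAEI hi)
    rcases Finset.mem_union.1 hi with hE | hA'
    · rw [if_pos hE]
      simp only [hc, if_pos hE]
      have h1 : |s i| - |g i z| ≤ ε * r := by
        have := abs_sub_abs_le_abs_sub (s i) (g i z)
        have h2 : |s i - g i z| = |g i z - s i| := abs_sub_comm _ _
        linarith
      have h2 : μ i * s i ≤ |μ i| * |s i| := by
        calc μ i * s i ≤ |μ i * s i| := le_abs_self _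
          _ = |μ i| * |s i| := abs_mul _ _
      have h3 : lam i * (|s i| - |g i z|) ≤ lam i * (ε * r) :=
        mul_le_mul_of_nonneg_left h1 hlami
      have h4 : (lam i - |μ i|) * |s i| = lam i * |s i| - |μ i| * |s i| := by ring
      linarith
    · have hiE : i ∉ E := Finset.disjoint_right.1 hEA hA'
      rw [if_neg hiE]
      simp only [hc, if_neg hiE]
      have h1 : max 0 (s i) - max 0 (g i z) ≤ ε * r := by
        have := abs_max_sub_max_le_abs (s i) (g i z) 0
        rw [max_comm (s i) 0, max_comm (g i z) 0] at this
        have h2 : |s i - g i z| = |g i z - s i| := abs_sub_comm _ _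
        have := abs_le.1 this
        linarith [this.1, this.2, he]
      have h2 : lam i * max 0 (s i) - μ i * s i ≥ min (μ i) (lam i - μ i) * |s i| := by
        rcases le_or_gt 0 (s i) with hpos | hneg
        · rw [max_eq_right hpos, abs_of_nonneg hpos]
          have h4 := mul_le_mul_of_nonneg_right (min_le_right (μ i) (lam i - μ i)) hpos
          have h5 : (lam i - μ i) * s i = lam i * s i - μ i * s i := by ring
          linarith
        · rw [max_eq_left (le_of_lt hneg), abs_of_neg hneg]
          have h4 := mul_le_mul_of_nonneg_right (min_le_left (μ i) (lam i - μ i))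
            (by linarith : (0:ℝ) ≤ -s i)
          have h5 : μ i * -s i = -(μ i * s i) := by ring
          linarith
      have h3 : lam i * (max 0 (s i) - max 0 (g i z)) ≤ lam i * (ε * r) :=
        mul_le_mul_of_nonneg_left h1 hlami
      linarith
  -- combine
  set S : ℝ := ∑ i ∈ E ∪ A, |s i| with hS
  have hSK : K⁻¹ * r ≤ S := by
    have h1 : r ≤ K * S := hKS (z - zbar)
    calc K⁻¹ * r ≤ K⁻¹ * (K * S) := mul_le_mul_of_nonneg_left h1 (by positivity)
      _ = S := by field_simp
  have hsum1 : ∑ i ∈ E, lam i * |g i z| + ∑ i ∈ A, lam i * max 0 (g i z)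
      = ∑ i ∈ E ∪ A, (if i ∈ E then lam i * |g i z| else lam i * max 0 (g i z)) := by
    rw [Finset.sum_union hEA]
    congr 1
    · exact (Finset.sum_congr rfl fun i hi => by rw [if_pos hi]).symm
    · exact (Finset.sum_congr rfl fun i hi =>
        by rw [if_neg (Finset.disjoint_right.1 hEA hi)]).symm
  have hsum2 : ∑ i ∈ E ∪ A, ((if i ∈ E then lam i * |g i z| else lam i * max 0 (g i z))
      - μ i * s i) ≥ ∑ i ∈ E ∪ A, (c i * |s i| - lam i * (ε * r)) :=
    Finset.sum_le_sum hterm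
  have hsum3 : ∑ i ∈ E ∪ A, (c i * |s i| - lam i * (ε * r))
      = ∑ i ∈ E ∪ A, c i * |s i| - L * (ε * r) := by
    rw [Finset.sum_sub_distrib, hL, ← Finset.sum_mul]
  have hsum4 : cmin * S ≤ ∑ i ∈ E ∪ A, c i * |s i| := by
    rw [hS, Finset.mul_sum]
    exact Finset.sum_le_sum fun i hi =>
      mul_le_mul_of_nonneg_right (hcminle i hi) (abs_nonneg _)
  have hmain : Jpen E I g₀ g lam z - Jpen E I g₀ g lam zbar ≥
      cmin * S - L * (ε * r) - ε * r := by
    have hexp : Jpen E I g₀ g lam z - Jpen E I g₀ g lam zbar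
        = (g₀ z - g₀ zbar) + ∑ i ∈ E, lam i * |g i z| + ∑ i ∈ I, lam i * max 0 (g i z) := by
      rw [hJbar]; unfold Jpen; ring
    rw [hexp]
    have hsplit : ∑ i ∈ E ∪ A, ((if i ∈ E then lam i * |g i z| else lam i * max 0 (g i z))
        - μ i * s i)
        = (∑ i ∈ E, lam i * |g i z| + ∑ i ∈ A, lam i * max 0 (g i z))
          - ∑ i ∈ E ∪ A, μ i * s i := by
      rw [Finset.sum_sub_distrib, hsum1]
    have h5 : ∑ i ∈ E, lam i * |g i z| + ∑ i ∈ A, lam i * max 0 (g i z)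
        ≥ cmin * S - L * (ε * r) + ∑ i ∈ E ∪ A, μ i * s i := by
      have := hsum2
      rw [hsplit, hsum3] at *
      linarith [hsum2, hsum3, hsum4]
    linarith [hg0bd, hIA, h5]
  -- final arithmetic
  have hεeq : (L + 1) * ε = cmin * K⁻¹ / 2 := by
    rw [hε]
    field_simp
  have hfin : cmin * S - L * (ε * r) - ε * r ≥ β * r := by
    have h1 : cmin * (K⁻¹ * r) ≤ cmin * S := mul_le_mul_of_nonneg_left hSK (le_of_lt hcmin0)
    have h2 : (L + 1) * ε * r = (cmin * K⁻¹ / 2) * r := by rw [hεeq]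
    have h3 : cmin * (K⁻¹ * r) = cmin * K⁻¹ * r := by ring
    rw [hβ]
    nlinarith
  calc Jpen E I g₀ g lam z - Jpen E I g₀ g lam zbar
      ≥ cmin * S - L * (ε * r) - ε * r := hmain
    _ ≥ β * r := hfin
end

section
/- (Growth transfers to the linearization.) Let ψ : ℝ^m → ℝ be a convex function, let G : ℝ^n → ℝ^m be differentiable at z̄ with (Fréchet) derivative A : ℝ^n → ℝ^m, and suppose there exist β > 0 and δ > 0 such that ψ(G(z)) ≥ ψ(G(z̄)) + β ‖z − z̄‖ for all z with ‖z − z̄‖ ≤ δ. Then there exists γ > 0 such that ψ(G(z̄) + A d) ≥ ψ(G(z̄)) + γ ‖d‖ for all d ∈ ℝ^n. -/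
open Topology Filter

theorem stmt14 {n m : ℕ} (ψ : EuclideanSpace ℝ (Fin m) → ℝ)
    (hψ : ConvexOn ℝ Set.univ ψ)
    (G : EuclideanSpace ℝ (Fin n) → EuclideanSpace ℝ (Fin m))
    (A : EuclideanSpace ℝ (Fin n) →L[ℝ] EuclideanSpace ℝ (Fin m))
    (zbar : EuclideanSpace ℝ (Fin n)) (hG : HasFDerivAt G A zbar)
    (β δ : ℝ) (hβ : 0 < β) (hδ : 0 < δ)
    (hgrowth : ∀ z : EuclideanSpace ℝ (Fin n), ‖z - zbar‖ ≤ δ →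
      ψ (G z) ≥ ψ (G zbar) + β * ‖z - zbar‖) :
    ∃ γ > (0 : ℝ), ∀ d : EuclideanSpace ℝ (Fin n),
      ψ (G zbar + A d) ≥ ψ (G zbar) + γ * ‖d‖ := by
  classical
  obtain ⟨K, t, ht, hlip⟩ := hψ.locallyLipschitz (G zbar)
  obtain ⟨ε, hε, hball⟩ := Metric.mem_nhds_iff.mp ht
  set L : ℝ := (K : ℝ) + 1 with hLdef
  have hL0 : 0 < L := by positivity
  have hKL : (K : ℝ) ≤ L := by simp [hLdef]
  set c : ℝ := β / (2 * L) with hcdef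
  have hc0 : 0 < c := by positivity
  have hLc : L * c = β / 2 := by
    field_simp [hcdef]
    rw [hcdef]; field_simp
  have ho : ∀ᶠ z in 𝓝 zbar, ‖G z - G zbar - A (z - zbar)‖ ≤ c * ‖z - zbar‖ :=
    (hG.isLittleO.def hc0)
  obtain ⟨r, hr, hrball⟩ := Metric.eventually_nhds_iff_ball.mp ho
  set t0 : ℝ := min (min δ (r / 2)) (ε / (2 * (c + ‖A‖ + 1))) with ht0def
  have hA1 : (0:ℝ) < c + ‖A‖ + 1 := by positivity
  have ht00 : 0 < t0 := by
    apply lt_min (lt_min hδ (by linarith)) (by positivity)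
  have ht0δ : t0 ≤ δ := le_trans (min_le_left _ _) (min_le_left _ _)
  have ht0r : t0 < r := lt_of_le_of_lt (le_trans (min_le_left _ _) (min_le_right _ _))
    (by linarith)
  have ht0ε : t0 * (c + ‖A‖) < ε := by
    have h1 : t0 ≤ ε / (2 * (c + ‖A‖ + 1)) := min_le_right _ _
    have h2 : t0 * (c + ‖A‖) ≤ (ε / (2 * (c + ‖A‖ + 1))) * (c + ‖A‖ + 1) := by
      apply mul_le_mul h1 (by linarith) (by positivity) (by positivity)
    have h3 : (ε / (2 * (c + ‖A‖ + 1))) * (c + ‖A‖ + 1) = ε / 2 := by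
      field_simp
    linarith
  -- key small-norm estimate
  have key : ∀ d : EuclideanSpace ℝ (Fin n), 0 < ‖d‖ → ‖d‖ ≤ t0 →
      ψ (G zbar + A d) ≥ ψ (G zbar) + (β / 2) * ‖d‖ := by
    intro d hd0 hdt
    set z := zbar + d with hz
    have hzz : z - zbar = d := by simp [hz]
    have hzδ : ‖z - zbar‖ ≤ δ := by rw [hzz]; linarith
    have hgr := hgrowth z hzδ
    rw [hzz] at hgr
    have hzr : z ∈ Metric.ball zbar r := by
      rw [Metric.mem_ball, dist_eq_norm, hzz]; linarith
    have herr : ‖G z - G zbar - A d‖ ≤ c * ‖d‖ := by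
      have := hrball z hzr
      rwa [hzz] at this
    have hAd : ‖A d‖ ≤ ‖A‖ * ‖d‖ := A.le_opNorm d
    have hx1 : G zbar + A d ∈ t := by
      apply hball
      rw [Metric.mem_ball, dist_eq_norm]
      have : ‖G zbar + A d - G zbar‖ = ‖A d‖ := by congr 1; abel
      rw [this]
      calc ‖A d‖ ≤ ‖A‖ * ‖d‖ := hAd
        _ ≤ ‖A‖ * t0 := by
            apply mul_le_mul_of_nonneg_left hdt (norm_nonneg _)
        _ < ε := by nlinarith [mul_le_mul_of_nonneg_left hdt hc0.le]
    have hx2 : G z ∈ t := by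
      apply hball
      rw [Metric.mem_ball, dist_eq_norm]
      calc ‖G z - G zbar‖ = ‖(G z - G zbar - A d) + A d‖ := by congr 1; abel
        _ ≤ ‖G z - G zbar - A d‖ + ‖A d‖ := norm_add_le _ _
        _ ≤ c * ‖d‖ + ‖A‖ * ‖d‖ := add_le_add herr hAd
        _ ≤ c * t0 + ‖A‖ * t0 := by
            have h1 := mul_le_mul_of_nonneg_left hdt hc0.le
            have h2 := mul_le_mul_of_nonneg_left hdt (norm_nonneg A)
            linarith
        _ = t0 * (c + ‖A‖) := by ring
        _ < ε := ht0ε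
    have hdist : dist (ψ (G z)) (ψ (G zbar + A d)) ≤ K * dist (G z) (G zbar + A d) :=
      hlip.dist_le_mul _ hx2 _ hx1
    have hdeq : dist (G z) (G zbar + A d) = ‖G z - G zbar - A d‖ := by
      rw [dist_eq_norm]; congr 1; abel
    have habs : |ψ (G z) - ψ (G zbar + A d)| ≤ L * (c * ‖d‖) := by
      rw [← Real.dist_eq]
      calc dist (ψ (G z)) (ψ (G zbar + A d)) ≤ K * dist (G z) (G zbar + A d) := hdist
        _ ≤ L * (c * ‖d‖) := by
            rw [hdeq]
            rw [hdeq] at *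
            apply mul_le_mul hKL herr (norm_nonneg _) hL0.le
    have h5 : L * (c * ‖d‖) = (β / 2) * ‖d‖ := by rw [← mul_assoc, hLc]
    have h6 : ψ (G z) - ψ (G zbar + A d) ≤ (β / 2) * ‖d‖ := by
      calc ψ (G z) - ψ (G zbar + A d) ≤ |ψ (G z) - ψ (G zbar + A d)| := le_abs_self _
        _ ≤ L * (c * ‖d‖) := habs
        _ = (β / 2) * ‖d‖ := h5
    linarith
  refine ⟨β / 2, by positivity, fun d => ?_⟩
  rcases eq_or_lt_of_le (norm_nonneg d) with h0 | h0
  · have hd : d = 0 := by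
      rw [← norm_eq_zero]; exact h0.symm
    simp [hd]
  rcases le_or_gt ‖d‖ t0 with hsmall | hbig
  · exact key d h0 hsmall
  · set lam : ℝ := t0 / ‖d‖ with hlam
    have hlam0 : 0 < lam := by positivity
    have hlam1 : lam < 1 := by
      rw [hlam, div_lt_one h0]; exact hbig
    have hnorm : ‖lam • d‖ = t0 := by
      rw [norm_smul, Real.norm_eq_abs, abs_of_pos hlam0, hlam]
      field_simp
    have hk := key (lam • d) (by rw [hnorm]; exact ht00) (by rw [hnorm])
    rw [hnorm] at hk
    have hAsmul : A (lam • d) = lam • A d := by rw [map_smul]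
    have hconv := hψ.2 (Set.mem_univ (G zbar)) (Set.mem_univ (G zbar + A d))
      (by linarith : (0:ℝ) ≤ 1 - lam) hlam0.le (by ring)
    have hcomb : (1 - lam) • G zbar + lam • (G zbar + A d) = G zbar + A (lam • d) := by
      rw [hAsmul, smul_add]
      module
    rw [hcomb] at hconv
    have ht0lam : t0 = lam * ‖d‖ := by
      rw [hlam]; field_simp
    have : ψ (G zbar) + (β / 2) * (lam * ‖d‖) ≤
        (1 - lam) • ψ (G zbar) + lam • ψ (G zbar + A d) := by
      rw [← ht0lam]; exact le_trans hk hconv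
    simp only [smul_eq_mul] at this
    have hfin : lam * (ψ (G zbar) + (β / 2) * ‖d‖) ≤ lam * ψ (G zbar + A d) := by
      nlinarith
    have := le_of_mul_le_mul_left (by linarith : lam * (ψ (G zbar) + (β / 2) * ‖d‖) ≤ lam * ψ (G zbar + A d)) hlam0
    linarith
end

section
/- (Superlinear convergence, unconstrained core.) Let ψ : ℝ^m → ℝ be convex and Lipschitz continuous with constant L, and let G : ℝ^n → ℝ^m be continuously differentiable with derivative G'(z) at z. Let {z^k} be a sequence in ℝ^n converging to z̄, and suppose: (i) growth at z̄: there exists γ > 0 with ψ(G(z̄) + G'(z̄) d) ≥ ψ(G(z̄)) + γ ‖d‖ for all d ∈ ℝ^n; and (ii) optimality of each step: for every k and every d ∈ ℝ^n, ψ(G(z^k) + G'(z^k)(z^{k+1} − z^k)) ≤ ψ(G(z^k) + G'(z^k) d). Then convergence is superlinear: ‖z^{k+1} − z̄‖ = o(‖z^k − z̄‖) as k → ∞, i.e. the sequence k ↦ ‖z^{k+1} − z̄‖ is little-o of k ↦ ‖z^k − z̄‖ along the at-top filter on ℕ. -/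
open Filter Topology Asymptotics

theorem stmt15 {n m : ℕ} (L : NNReal) (ψ : EuclideanSpace ℝ (Fin m) → ℝ)
    (hψc : ConvexOn ℝ Set.univ ψ) (hψL : LipschitzWith L ψ)
    (G : EuclideanSpace ℝ (Fin n) → EuclideanSpace ℝ (Fin m)) (hG : ContDiff ℝ 1 G)
    (z : ℕ → EuclideanSpace ℝ (Fin n)) (zbar : EuclideanSpace ℝ (Fin n))
    (hz : Tendsto z atTop (𝓝 zbar))
    (γ : ℝ) (hγ : 0 < γ)
    (hgrowth : ∀ d : EuclideanSpace ℝ (Fin n),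
      ψ (G zbar + fderiv ℝ G zbar d) ≥ ψ (G zbar) + γ * ‖d‖)
    (hopt : ∀ k : ℕ, ∀ d : EuclideanSpace ℝ (Fin n),
      ψ (G (z k) + fderiv ℝ G (z k) (z (k + 1) - z k)) ≤ ψ (G (z k) + fderiv ℝ G (z k) d)) :
    (fun k => ‖z (k + 1) - zbar‖) =o[atTop] fun k => ‖z k - zbar‖ := by
  set f' := fderiv ℝ G zbar with hf'
  have hstrict : HasStrictFDerivAt G f' zbar :=
    hG.contDiffAt.hasStrictFDerivAt one_ne_zero
  -- little-o estimate along the sequence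
  have hlo : (fun k => G (z k) - G zbar - f' (z k - zbar)) =o[atTop]
      (fun k => z k - zbar) := by
    have h := hstrict.isLittleO
    have ht : Tendsto (fun k => (z k, zbar)) atTop (𝓝 (zbar, zbar)) :=
      hz.prodMk_nhds tendsto_const_nhds
    simpa [Function.comp_def] using h.comp_tendsto ht
  -- convergence of derivatives along the sequence
  have hA : Tendsto (fun k => fderiv ℝ G (z k)) atTop (𝓝 f') :=
    ((hG.continuous_fderiv one_ne_zero).tendsto zbar).comp hz
  -- Lipschitz one-sided estimate
  have lip : ∀ x y, ψ x ≤ ψ y + (L : ℝ) * ‖x - y‖ := by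
    intro x y
    have h := hψL.dist_le_mul x y
    rw [Real.dist_eq, dist_eq_norm] at h
    linarith [(abs_le.mp h).2]
  have hL0 : (0 : ℝ) ≤ (L : ℝ) := L.coe_nonneg
  rw [isLittleO_iff]
  intro c hc
  set L' : ℝ := (L : ℝ) + 1 with hL'def
  have hL' : (0 : ℝ) < L' := by positivity
  have hLle : (L : ℝ) ≤ L' := by simp [hL'def]
  set ε : ℝ := min (γ / (2 * L')) (c * γ / (8 * L')) with hεdef
  have hε : 0 < ε := lt_min (by positivity) (by positivity)
  have hεa : ε * (2 * L') ≤ γ := by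
    have := min_le_left (γ / (2 * L')) (c * γ / (8 * L'))
    rw [← hεdef] at this
    exact (le_div_iff₀ (by positivity)).mp this
  have hεb : ε * (8 * L') ≤ c * γ := by
    have := min_le_right (γ / (2 * L')) (c * γ / (8 * L'))
    rw [← hεdef] at this
    exact (le_div_iff₀ (by positivity)).mp this
  have h1 : ∀ᶠ k in atTop, ‖G (z k) - G zbar - f' (z k - zbar)‖ ≤ ε * ‖z k - zbar‖ :=
    hlo.def hε
  have h2 : ∀ᶠ k in atTop, ‖fderiv ℝ G (z k) - f'‖ < ε := by
    have := Metric.tendsto_nhds.mp hA ε hε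
    simpa [dist_eq_norm] using this
  filter_upwards [h1, h2] with k hk1 hk2
  set A := fderiv ℝ G (z k) with hAdef
  set a := z (k + 1) - zbar with ha
  set b := z k - zbar with hb
  have hfA : ‖f' - A‖ ≤ ε := by
    rw [norm_sub_rev]; exact hk2.le
  have hT : ‖G (z k) - G zbar - f' b‖ ≤ ε * ‖b‖ := hk1
  -- bound 1
  have e1 : G (z k) + A (zbar - z k) - G zbar
      = (G (z k) - G zbar - f' b) + ((f' - A) b - (f' b - A b)) + (f' b - A b) := by
    simp only [hb, map_sub, ContinuousLinearMap.sub_apply]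
    abel
  have bound1 : ‖G (z k) + A (zbar - z k) - G zbar‖ ≤ 2 * ε * ‖b‖ := by
    rw [e1]
    have h3 : ‖(f' - A) b‖ ≤ ε * ‖b‖ :=
      le_trans ((f' - A).le_opNorm b) (mul_le_mul_of_nonneg_right hfA (norm_nonneg b))
    have h4 : (f' - A) b - (f' b - A b) = 0 := by
      simp [ContinuousLinearMap.sub_apply]
    rw [h4]
    calc ‖(G (z k) - G zbar - f' b) + 0 + (f' b - A b)‖
        ≤ ‖G (z k) - G zbar - f' b‖ + ‖f' b - A b‖ := by
          simpa using norm_add_le (G (z k) - G zbar - f' b) (f' b - A b)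
      _ ≤ ε * ‖b‖ + ε * ‖b‖ := by
          refine add_le_add hT ?_
          have : f' b - A b = (f' - A) b := by simp [ContinuousLinearMap.sub_apply]
          rw [this]; exact h3
      _ = 2 * ε * ‖b‖ := by ring
  -- bound 2
  have e2 : G zbar + f' a - (G (z k) + A (z (k + 1) - z k))
      = -(G (z k) + A (zbar - z k) - G zbar) + (f' a - A a) := by
    simp only [ha, map_sub, ContinuousLinearMap.sub_apply]
    abel
  have bound2 : ‖G zbar + f' a - (G (z k) + A (z (k + 1) - z k))‖
      ≤ 2 * ε * ‖b‖ + ε * ‖a‖ := by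
    rw [e2]
    have h3 : ‖f' a - A a‖ ≤ ε * ‖a‖ := by
      have : f' a - A a = (f' - A) a := by simp [ContinuousLinearMap.sub_apply]
      rw [this]
      exact le_trans ((f' - A).le_opNorm a) (mul_le_mul_of_nonneg_right hfA (norm_nonneg a))
    have h5 := norm_add_le (-(G (z k) + A (zbar - z k) - G zbar)) (f' a - A a)
    rw [norm_neg] at h5
    exact le_trans h5 (add_le_add bound1 h3)
  -- the main chain
  have hgr := hgrowth a
  have c1 : ψ (G zbar + f' a) ≤ ψ (G (z k) + A (z (k + 1) - z k))
      + (L : ℝ) * ‖G zbar + f' a - (G (z k) + A (z (k + 1) - z k))‖ :=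
    lip _ _
  have c2 : ψ (G (z k) + A (z (k + 1) - z k)) ≤ ψ (G (z k) + A (zbar - z k)) :=
    hopt k (zbar - z k)
  have c3 : ψ (G (z k) + A (zbar - z k)) ≤ ψ (G zbar)
      + (L : ℝ) * ‖G (z k) + A (zbar - z k) - G zbar‖ := lip _ _
  have m1 : (L : ℝ) * ‖G zbar + f' a - (G (z k) + A (z (k + 1) - z k))‖
      ≤ (L : ℝ) * (2 * ε * ‖b‖ + ε * ‖a‖) := mul_le_mul_of_nonneg_left bound2 hL0
  have m2 : (L : ℝ) * ‖G (z k) + A (zbar - z k) - G zbar‖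
      ≤ (L : ℝ) * (2 * ε * ‖b‖) := mul_le_mul_of_nonneg_left bound1 hL0
  have key : γ * ‖a‖ ≤ 4 * (L : ℝ) * ε * ‖b‖ + (L : ℝ) * ε * ‖a‖ := by
    linarith [hgr, c1, c2, c3, m1, m2]
  have kLa : (L : ℝ) * ε * ‖a‖ ≤ (γ / 2) * ‖a‖ := by
    refine mul_le_mul_of_nonneg_right ?_ (norm_nonneg a)
    linarith [mul_le_mul_of_nonneg_right hLle hε.le, hεa]
  have kLb : 4 * (L : ℝ) * ε * ‖b‖ ≤ (c * γ / 2) * ‖b‖ := by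
    refine mul_le_mul_of_nonneg_right ?_ (norm_nonneg b)
    linarith [mul_le_mul_of_nonneg_right hLle hε.le, hεb]
  have final : γ * ‖a‖ ≤ γ * (c * ‖b‖) := by linarith [key, kLa, kLb]
  have hfin := le_of_mul_le_mul_left final hγ
  rw [Real.norm_of_nonneg (norm_nonneg _), Real.norm_of_nonneg (norm_nonneg _)]
  exact hfin
end
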